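/- arXiv:2503.14117 — 5 statements merged into one kernel-verified Lean document; each statement's English description precedes it below -/
import Mathlib

section
/- Let Γ be a nonempty finite set, let 𝓑 be a nonempty family of subsets of Γ, and let A ⊆ Γ be non-trivial. Then ρ(A, 𝓑) ≤ D_∩(A | 𝓑); that is, the cover complexity of A with respect to 𝓑 is at most the intersection complexity of A with respect to 𝓑. -/
open Set Filter

section Defs

variable {Γ : Type*}

/-- `StepOK 𝓑 seq ops` says that each set `seq i` in the sequence is obtained as the
union or intersection (according to `ops i`) of two sets, each of which is either a
generator in `𝓑` or an earlier set of the sequence. -/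
def StepOK (𝓑 : Set (Set Γ)) {t : ℕ} (seq : Fin t → Set Γ) (ops : Fin t → Bool) : Prop :=
  ∀ i : Fin t, ∃ X Y : Set Γ,
    (X ∈ 𝓑 ∨ ∃ j : Fin t, j < i ∧ X = seq j) ∧
    (Y ∈ 𝓑 ∨ ∃ j : Fin t, j < i ∧ Y = seq j) ∧
    seq i = if ops i = true then X ∩ Y else X ∪ Y

/-- The number of intersection operations used in the sequence. -/
def interCount {t : ℕ} (ops : Fin t → Bool) : ℕ :=
  (Finset.univ.filter fun i => ops i = true).card

/-- The number of union operations used in the sequence. -/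
def unionCount {t : ℕ} (ops : Fin t → Bool) : ℕ :=
  (Finset.univ.filter fun i => ops i = false).card

/-- The discrete complexity `D(A | 𝓑)`: the minimum length of a sequence generating
`A` from `𝓑` (`⊤` if none exists). -/
noncomputable def Dtot (A : Set Γ) (𝓑 : Set (Set Γ)) : ℕ∞ :=
  sInf {m : ℕ∞ | ∃ (t : ℕ) (seq : Fin (t + 1) → Set Γ) (ops : Fin (t + 1) → Bool),
    StepOK 𝓑 seq ops ∧ seq (Fin.last t) = A ∧ m = ((t + 1 : ℕ) : ℕ∞)}

/-- The intersection complexity `D_∩(A | 𝓑)`: the minimum number of intersection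
operations over all sequences generating `A` from `𝓑`. -/
noncomputable def Dcap (A : Set Γ) (𝓑 : Set (Set Γ)) : ℕ∞ :=
  sInf {m : ℕ∞ | ∃ (t : ℕ) (seq : Fin (t + 1) → Set Γ) (ops : Fin (t + 1) → Bool),
    StepOK 𝓑 seq ops ∧ seq (Fin.last t) = A ∧ m = ((interCount ops : ℕ) : ℕ∞)}

/-- The union complexity `D_∪(A | 𝓑)`. -/
noncomputable def Dcup (A : Set Γ) (𝓑 : Set (Set Γ)) : ℕ∞ :=
  sInf {m : ℕ∞ | ∃ (t : ℕ) (seq : Fin (t + 1) → Set Γ) (ops : Fin (t + 1) → Bool),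
    StepOK 𝓑 seq ops ∧ seq (Fin.last t) = A ∧ m = ((unionCount ops : ℕ) : ℕ∞)}

/-- Simultaneous discrete complexity `D(A_1, …, A_ℓ | 𝓑)` of generating every set in
the family `As` from `𝓑`. -/
noncomputable def DtotSim (As : Set (Set Γ)) (𝓑 : Set (Set Γ)) : ℕ∞ :=
  sInf {m : ℕ∞ | ∃ (t : ℕ) (seq : Fin (t + 1) → Set Γ) (ops : Fin (t + 1) → Bool),
    StepOK 𝓑 seq ops ∧ (∀ A ∈ As, ∃ i, seq i = A) ∧ m = ((t + 1 : ℕ) : ℕ∞)}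

/-- Simultaneous intersection complexity. -/
noncomputable def DcapSim (As : Set (Set Γ)) (𝓑 : Set (Set Γ)) : ℕ∞ :=
  sInf {m : ℕ∞ | ∃ (t : ℕ) (seq : Fin (t + 1) → Set Γ) (ops : Fin (t + 1) → Bool),
    StepOK 𝓑 seq ops ∧ (∀ A ∈ As, ∃ i, seq i = A) ∧ m = ((interCount ops : ℕ) : ℕ∞)}

/-- Simultaneous union complexity. -/
noncomputable def DcupSim (As : Set (Set Γ)) (𝓑 : Set (Set Γ)) : ℕ∞ :=
  sInf {m : ℕ∞ | ∃ (t : ℕ) (seq : Fin (t + 1) → Set Γ) (ops : Fin (t + 1) → Bool),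
    StepOK 𝓑 seq ops ∧ (∀ A ∈ As, ∃ i, seq i = A) ∧ m = ((unionCount ops : ℕ) : ℕ∞)}

/-- A semi-filter over `U`: a nonempty, upward-closed (within `U`) family of subsets
of `U` not containing `∅`. -/
def SemiFilter (U : Set Γ) (F : Set (Set Γ)) : Prop :=
  F.Nonempty ∧ (∀ S ∈ F, S ⊆ U) ∧
    (∀ S ∈ F, ∀ T : Set Γ, S ⊆ T → T ⊆ U → T ∈ F) ∧ ∅ ∉ F

/-- `F` is above the element `w` with respect to `𝓑` and `U`. -/
def Above (𝓑 : Set (Set Γ)) (U : Set Γ) (F : Set (Set Γ)) (w : Γ) : Prop :=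
  ∀ B ∈ 𝓑, w ∈ B → B ∩ U ∈ F

/-- `F` preserves the pair `p = (E, H)`. -/
def PreservesPair (F : Set (Set Γ)) (p : Set Γ × Set Γ) : Prop :=
  p.1 ∈ F → p.2 ∈ F → p.1 ∩ p.2 ∈ F

/-- `Λ` is a family of pairs of subsets of `U = Aᶜ` such that no semi-filter over `U`
both preserves `Λ` and is above some element of `A`. -/
def Covers (A : Set Γ) (𝓑 : Set (Set Γ)) (Λ : Finset (Set Γ × Set Γ)) : Prop :=
  (∀ p ∈ Λ, p.1 ⊆ Aᶜ ∧ p.2 ⊆ Aᶜ) ∧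
    ¬∃ (F : Set (Set Γ)) (a : Γ), SemiFilter Aᶜ F ∧ a ∈ A ∧ Above 𝓑 Aᶜ F a ∧
      ∀ p ∈ Λ, PreservesPair F p

/-- The cover complexity `ρ(A, 𝓑)`. -/
noncomputable def rho (A : Set Γ) (𝓑 : Set (Set Γ)) : ℕ∞ :=
  sInf {m : ℕ∞ | ∃ Λ : Finset (Set Γ × Set Γ), Covers A 𝓑 Λ ∧ m = ((Λ.card : ℕ) : ℕ∞)}

/-- A semi-ultra-filter over `U`: a semi-filter containing, for every `A' ⊆ U`, at
least one of `A'` and `U \ A'`. -/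
def SemiUltraFilter (U : Set Γ) (F : Set (Set Γ)) : Prop :=
  SemiFilter U F ∧ ∀ A' : Set Γ, A' ⊆ U → (A' ∈ F ∨ U \ A' ∈ F)

/-- The conondeterministic cover complexity `ρ_ultra(A, 𝓑)`. -/
noncomputable def rhoUltra (A : Set Γ) (𝓑 : Set (Set Γ)) : ℕ∞ :=
  sInf {m : ℕ∞ | ∃ Λ : Finset (Set Γ × Set Γ),
    (∀ p ∈ Λ, p.1 ⊆ Aᶜ ∧ p.2 ⊆ Aᶜ) ∧
    (¬∃ (F : Set (Set Γ)) (a : Γ), SemiUltraFilter Aᶜ F ∧ a ∈ A ∧ Above 𝓑 Aᶜ F a ∧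
      ∀ p ∈ Λ, PreservesPair F p) ∧
    m = ((Λ.card : ℕ) : ℕ∞)}

/-- One step of the evaluation of a syntactic (possibly cyclic) sequence: an argument
is either a reference to a member of the sequence or a fixed generator set. -/
def cycEval {t : ℕ} (arg1 arg2 : Fin t → Fin t ⊕ Set Γ) (ops : Fin t → Bool) :
    ℕ → Fin t → Set Γ
  | 0 => fun _ => ∅
  | j + 1 => fun i =>
      cycEval arg1 arg2 ops j i ∪
        (if ops i = true then
          Sum.elim (cycEval arg1 arg2 ops j) id (arg1 i) ∩
            Sum.elim (cycEval arg1 arg2 ops j) id (arg2 i)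
        else
          Sum.elim (cycEval arg1 arg2 ops j) id (arg1 i) ∪
            Sum.elim (cycEval arg1 arg2 ops j) id (arg2 i))

/-- The fixed set arguments of a syntactic sequence must be generators from `𝓑`. -/
def ArgsOK (𝓑 : Set (Set Γ)) {t : ℕ} (arg1 arg2 : Fin t → Fin t ⊕ Set Γ) : Prop :=
  ∀ i : Fin t, (∀ B : Set Γ, arg1 i = Sum.inr B → B ∈ 𝓑) ∧
    (∀ B : Set Γ, arg2 i = Sum.inr B → B ∈ 𝓑)

/-- The cyclic intersection complexity `D°_∩(A | 𝓑)`: the minimum number of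
intersection operations over all syntactic sequences generating `A` from `𝓑`. -/
noncomputable def DcapCyc (A : Set Γ) (𝓑 : Set (Set Γ)) : ℕ∞ :=
  sInf {m : ℕ∞ | ∃ (t : ℕ) (arg1 arg2 : Fin (t + 1) → Fin (t + 1) ⊕ Set Γ)
      (ops : Fin (t + 1) → Bool),
    ArgsOK 𝓑 arg1 arg2 ∧
    (∃ j : ℕ, ∀ j' ≥ j, cycEval arg1 arg2 ops j' (Fin.last t) = A) ∧
    m = ((interCount ops : ℕ) : ℕ∞)}

end Defs

/-- The row star `R_i ⊆ [N] × [M]`. -/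
def rowSet (N M : ℕ) (i : Fin N) : Set (Fin N × Fin M) := {p | p.1 = i}

/-- The column star `C_j ⊆ [N] × [M]`. -/
def colSet (N M : ℕ) (j : Fin M) : Set (Fin N × Fin M) := {p | p.2 = j}

/-- The generators `𝓖_{N,M}` of graph complexity: all row stars and column stars. -/
def graphGens (N M : ℕ) : Set (Set (Fin N × Fin M)) :=
  Set.range (rowSet N M) ∪ Set.range (colSet N M)

/-- The generators `𝓑_m` of Boolean circuit complexity over `{0,1}^m`:
all sets `B_i = {v : v_i = 1}` and their complements. -/
def cubeGens (m : ℕ) : Set (Set (Fin m → Bool)) :=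
  {S | ∃ i : Fin m, S = {v | v i = true} ∨ S = {v | v i = false}}

/-- `bin : [N] → {0,1}^n` for `N = 2^n`: the element `k` (representing the integer
`k + 1`) maps to the string `w` with `num(w) = k`, i.e. position `j` holds bit
`n - 1 - j` of `k`. -/
def binMap (n : ℕ) (k : Fin (2 ^ n)) : Fin n → Bool :=
  fun j => (k : ℕ).testBit (n - 1 - (j : ℕ))

/-- The bijection `φ : [N] × [N] → {0,1}^{2n}`, `φ(u, v) = bin(u)bin(v)`. -/
def phi (n : ℕ) (p : Fin (2 ^ n) × Fin (2 ^ n)) : Fin (2 * n) → Bool :=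
  fun j =>
    if h : (j : ℕ) < n then binMap n p.1 ⟨(j : ℕ), h⟩
    else binMap n p.2 ⟨(j : ℕ) - n, by have := j.isLt; omega⟩

/-- The canonical family `𝓕_e` for an edge `e = (u, v)` of a graph `G`:
all `W ⊆ Ḡ` containing `R_u ∩ Ḡ` or `C_v ∩ Ḡ`. -/
def canonFam (N : ℕ) (G : Set (Fin N × Fin N)) (e : Fin N × Fin N) :
    Set (Set (Fin N × Fin N)) :=
  {W | W ⊆ Gᶜ ∧ (rowSet N N e.1 ∩ Gᶜ ⊆ W ∨ colSet N N e.2 ∩ Gᶜ ⊆ W)}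

/-- The canonical cover complexity `ρ_can(G, 𝓖_{N,N})`: the minimum size of a family
`Λ` of pairs of subsets of `Ḡ` such that every canonical semi-filter `𝓕_e`
(for `e ∈ G`, when it is a semi-filter) fails to preserve some pair in `Λ`. -/
noncomputable def rhoCan (N : ℕ) (G : Set (Fin N × Fin N)) : ℕ∞ :=
  sInf {m : ℕ∞ | ∃ Λ : Finset (Set (Fin N × Fin N) × Set (Fin N × Fin N)),
    (∀ p ∈ Λ, p.1 ⊆ Gᶜ ∧ p.2 ⊆ Gᶜ) ∧
    (∀ e ∈ G, SemiFilter Gᶜ (canonFam N G e) →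
      ∃ p ∈ Λ, ¬ PreservesPair (canonFam N G e) p) ∧
    m = ((Λ.card : ℕ) : ℕ∞)}

/-- Fusion lower bound: for a nonempty finite ground set `Γ`, a
nonempty family `𝓑` of subsets of `Γ`, and a non-trivial `A ⊆ Γ`,
`ρ(A, 𝓑) ≤ D_∩(A | 𝓑)`. -/
theorem fusion_lower_bound {Γ : Type*} [Fintype Γ] [Nonempty Γ]
    (𝓑 : Set (Set Γ)) (h𝓑 : 𝓑.Nonempty)
    (A : Set Γ) (hA₁ : A ≠ ∅) (hA₂ : A ≠ Set.univ) :
    rho A 𝓑 ≤ Dcap A 𝓑 := by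
  classical
  apply le_sInf
  rintro m ⟨t, seq, ops, hstep, hlast, rfl⟩
  set U := Aᶜ with hU
  choose X Y hX hY hseq using hstep
  set Λ : Finset (Set Γ × Set Γ) :=
    (Finset.univ.filter fun i => ops i = true).image
      (fun i => (X i ∩ U, Y i ∩ U)) with hΛ
  have hcard : ((Λ.card : ℕ) : ℕ∞) ≤ ((interCount ops : ℕ) : ℕ∞) := by
    simp only [Nat.cast_le]
    exact Finset.card_image_le
  refine le_trans (sInf_le ?_) hcard
  refine ⟨Λ, ⟨?_, ?_⟩, rfl⟩
  · rintro p hp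
    simp only [hΛ, Finset.mem_image, Finset.mem_filter] at hp
    obtain ⟨i, -, rfl⟩ := hp
    exact ⟨Set.inter_subset_right, Set.inter_subset_right⟩
  · rintro ⟨F, a, hF, haA, habove, hpres⟩
    have key : ∀ n : ℕ, ∀ i : Fin (t+1), (i : ℕ) ≤ n → a ∈ seq i → seq i ∩ U ∈ F := by
      intro n
      induction n using Nat.strong_induction_on with
      | _ n ih =>
        intro i hin hai
        have base : ∀ Z, (Z ∈ 𝓑 ∨ ∃ j, j < i ∧ Z = seq j) → a ∈ Z → Z ∩ U ∈ F := by
          rintro Z (hZ | ⟨j, hj, rfl⟩) haZ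
          · exact habove Z hZ haZ
          · exact ih (j : ℕ) (lt_of_lt_of_le hj hin) j le_rfl haZ
        by_cases hop : ops i = true
        · rw [hseq i, if_pos hop] at hai ⊢
          have h1 := base (X i) (hX i) hai.1
          have h2 := base (Y i) (hY i) hai.2
          have hp : (X i ∩ U, Y i ∩ U) ∈ Λ := by
            simp only [hΛ, Finset.mem_image, Finset.mem_filter]
            exact ⟨i, ⟨Finset.mem_univ i, hop⟩, rfl⟩
          have hmem := hpres _ hp h1 h2
          have : (X i ∩ U) ∩ (Y i ∩ U) = X i ∩ Y i ∩ U := by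
            ext x; simp only [Set.mem_inter_iff]; tauto
          rwa [this] at hmem
        · rw [hseq i, if_neg hop] at hai ⊢
          obtain ⟨-, -, hup, -⟩ := hF
          rcases hai with h | h
          · exact hup _ (base (X i) (hX i) h) _
              (fun x hx => ⟨Or.inl hx.1, hx.2⟩) Set.inter_subset_right
          · exact hup _ (base (Y i) (hY i) h) _
              (fun x hx => ⟨Or.inr hx.1, hx.2⟩) Set.inter_subset_right
    have hfin := key (Fin.last t : ℕ) (Fin.last t) le_rfl (hlast ▸ haA)
    rw [hlast] at hfin
    have hemp : (∅ : Set Γ) ∈ F := by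
      simpa [hU, Set.inter_compl_self] using hfin
    exact hF.2.2.2 hemp
end

section
/- Let Γ be a nonempty finite set, let 𝓑 be a nonempty family of subsets of Γ, and let A ⊆ Γ be non-trivial. Then D_∩(A | 𝓑) ≤ ρ(A, 𝓑)²; that is, the intersection complexity of A with respect to 𝓑 is at most the square of its cover complexity. -/
open Set Filter

section Machinery

open Classical

variable {Γ : Type*}

/-- Auxiliary: "there is a generating sequence with last element `L`, computing all
sets in `S`, using at most `k` intersections". -/
def Computes (𝓑 : Set (Set Γ)) (k : ℕ) (S : Set (Set Γ)) (L : Set Γ) : Prop :=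
  ∃ (t : ℕ) (seq : Fin (t + 1) → Set Γ) (ops : Fin (t + 1) → Bool),
    StepOK 𝓑 seq ops ∧ (∀ X ∈ S, ∃ i, seq i = X) ∧ seq (Fin.last t) = L ∧
      interCount ops ≤ k

lemma interCount_snoc {t : ℕ} (ops : Fin (t + 1) → Bool) (b : Bool) :
    interCount (Fin.snoc ops b : Fin (t + 2) → Bool)
      = interCount ops + (if b = true then 1 else 0) := by
  classical
  unfold interCount
  rw [Finset.card_filter, Finset.card_filter, Fin.sum_univ_castSucc]
  simp [Fin.snoc_castSucc, Fin.snoc_last]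

lemma Computes.mono {𝓑 : Set (Set Γ)} {k k' : ℕ} {S S' : Set (Set Γ)} {L : Set Γ}
    (h : Computes 𝓑 k S L) (hS : S' ⊆ S) (hk : k ≤ k') : Computes 𝓑 k' S' L := by
  obtain ⟨t, seq, ops, h1, h2, h3, h4⟩ := h
  exact ⟨t, seq, ops, h1, fun X hX => h2 X (hS hX), h3, le_trans h4 hk⟩

lemma Computes.init {𝓑 : Set (Set Γ)} {B : Set Γ} (hB : B ∈ 𝓑) :
    Computes 𝓑 0 {B} B := by
  refine ⟨0, fun _ => B, fun _ => false, ?_, ?_, rfl, ?_⟩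
  · intro i
    exact ⟨B, B, Or.inl hB, Or.inl hB, by simp⟩
  · intro X hX; exact ⟨0, hX.symm⟩
  · simp [interCount]

lemma Computes.step {𝓑 : Set (Set Γ)} {k : ℕ} {S : Set (Set Γ)} {L X Y : Set Γ}
    (h : Computes 𝓑 k S L) (hX : X ∈ 𝓑 ∪ S) (hY : Y ∈ 𝓑 ∪ S) (b : Bool) :
    Computes 𝓑 (k + (if b = true then 1 else 0))
      (S ∪ {if b = true then X ∩ Y else X ∪ Y}) (if b = true then X ∩ Y else X ∪ Y) := by
  obtain ⟨t, seq, ops, h1, h2, h3, h4⟩ := h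
  refine ⟨t + 1, Fin.snoc seq (if b = true then X ∩ Y else X ∪ Y), Fin.snoc ops b,
    ?_, ?_, by simp, ?_⟩
  · intro i
    induction i using Fin.lastCases with
    | last =>
      have hmem : ∀ Z : Set Γ, Z ∈ 𝓑 ∪ S →
          (Z ∈ 𝓑 ∨ ∃ j : Fin (t + 2), j < Fin.last (t + 1) ∧
            Z = (Fin.snoc seq (if b = true then X ∩ Y else X ∪ Y) : Fin (t+2) → Set Γ) j) := by
        intro Z hZ
        rcases hZ with hZ | hZ
        · exact Or.inl hZ
        · obtain ⟨i, hi⟩ := h2 Z hZ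
          exact Or.inr ⟨i.castSucc, Fin.castSucc_lt_last i, by simp [hi]⟩
      refine ⟨X, Y, hmem X hX, hmem Y hY, ?_⟩
      simp [Fin.snoc_last]
    | cast j =>
      obtain ⟨X', Y', hX', hY', hstep⟩ := h1 j
      have lift : ∀ Z : Set Γ, (Z ∈ 𝓑 ∨ ∃ j' : Fin (t + 1), j' < j ∧ Z = seq j') →
          (Z ∈ 𝓑 ∨ ∃ j' : Fin (t + 2), j' < j.castSucc ∧
            Z = (Fin.snoc seq (if b = true then X ∩ Y else X ∪ Y) : Fin (t+2) → Set Γ) j') := by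
        intro Z hZ
        rcases hZ with hZ | ⟨j', hj', hZ⟩
        · exact Or.inl hZ
        · exact Or.inr ⟨j'.castSucc, by simpa using hj', by simp [hZ]⟩
      exact ⟨X', Y', lift X' hX', lift Y' hY', by simpa using hstep⟩
  · intro Z hZ
    rcases hZ with hZ | hZ
    · obtain ⟨i, hi⟩ := h2 Z hZ
      exact ⟨i.castSucc, by simp [hi]⟩
    · exact ⟨Fin.last (t + 1), by simp [Set.mem_singleton_iff.mp hZ]⟩
  · rw [interCount_snoc]
    exact Nat.add_le_add_right h4 _

lemma Computes.union {𝓑 : Set (Set Γ)} {k : ℕ} {S : Set (Set Γ)} {L X Y : Set Γ}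
    (h : Computes 𝓑 k S L) (hX : X ∈ 𝓑 ∪ S) (hY : Y ∈ 𝓑 ∪ S) :
    Computes 𝓑 k (S ∪ {X ∪ Y}) (X ∪ Y) := by
  have := h.step hX hY false
  simpa using this

lemma Computes.inter {𝓑 : Set (Set Γ)} {k : ℕ} {S : Set (Set Γ)} {L X Y : Set Γ}
    (h : Computes 𝓑 k S L) (hX : X ∈ 𝓑 ∪ S) (hY : Y ∈ 𝓑 ∪ S) :
    Computes 𝓑 (k + 1) (S ∪ {X ∩ Y}) (X ∩ Y) := by
  have := h.step hX hY true
  simpa using this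

lemma Computes.sUnion {𝓑 : Set (Set Γ)} {k : ℕ} {S : Set (Set Γ)} {L : Set Γ}
    (h : Computes 𝓑 k S L) (T : Finset (Set Γ)) (hT : T.Nonempty)
    (hTsub : ↑T ⊆ 𝓑 ∪ S) :
    Computes 𝓑 k (S ∪ {⋃₀ ↑T}) (⋃₀ ↑T) := by
  classical
  induction hT using Finset.Nonempty.cons_induction with
  | singleton X =>
      have hX : X ∈ 𝓑 ∪ S := hTsub (by simp)
      have := h.union hX hX
      simpa using this
  | cons a T ha hT ih =>
      have hsub' : ↑T ⊆ 𝓑 ∪ S := by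
        intro x hx; exact hTsub (by simp [hx])
      have ha' : a ∈ 𝓑 ∪ S := hTsub (by simp)
      have h1 := ih hsub'
      have h2 := h1.union (X := a) (Y := ⋃₀ ↑T)
        (by rcases ha' with h' | h'; exact Or.inl h'; exact Or.inr (Or.inl h'))
        (Or.inr (Or.inr rfl))
      have : (⋃₀ ↑(Finset.cons a T ha) : Set Γ) = a ∪ ⋃₀ ↑T := by
        simp [Finset.coe_cons, Set.sUnion_insert]
      rw [this]
      refine h2.mono ?_ le_rfl
      intro x hx
      rcases hx with hx | hx
      · exact Or.inl (Or.inl hx)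
      · exact Or.inr hx

end Machinery

section Semantics

variable {Γ : Type*}

/-- The closure hierarchy: `Ffam 𝓑 U Λ s x` is the stage-`s` approximation to the
minimal semi-filter candidate above `x` preserving `Λ`. -/
def Ffam (𝓑 : Set (Set Γ)) (U : Set Γ) (Λ : Finset (Set Γ × Set Γ)) :
    ℕ → Γ → Set (Set Γ)
  | 0 => fun x => {W | W ⊆ U ∧ ∃ B ∈ 𝓑, x ∈ B ∧ B ∩ U ⊆ W}
  | (s + 1) => fun x =>
      Ffam 𝓑 U Λ s x ∪
        {W | W ⊆ U ∧ ∃ p ∈ Λ, p.1 ∈ Ffam 𝓑 U Λ s x ∧ p.2 ∈ Ffam 𝓑 U Λ s x ∧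
          p.1 ∩ p.2 ⊆ W}

variable {𝓑 : Set (Set Γ)} {U : Set Γ} {Λ : Finset (Set Γ × Set Γ)}

lemma Ffam_subset_succ (s : ℕ) (x : Γ) : Ffam 𝓑 U Λ s x ⊆ Ffam 𝓑 U Λ (s + 1) x :=
  Set.subset_union_left

lemma Ffam_mono {s s' : ℕ} (h : s ≤ s') (x : Γ) :
    Ffam 𝓑 U Λ s x ⊆ Ffam 𝓑 U Λ s' x := by
  induction h with
  | refl => exact le_rfl
  | step _ ih => exact le_trans ih (Ffam_subset_succ _ x)

lemma Ffam_subset_U {s : ℕ} {x : Γ} {W : Set Γ} (h : W ∈ Ffam 𝓑 U Λ s x) : W ⊆ U := by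
  cases s with
  | zero => exact h.1
  | succ s => rcases h with h | h
              · exact (by induction s with
                  | zero => exact h.1
                  | succ s ih => rcases h with h | h
                                 · exact ih h
                                 · exact h.1)
              · exact h.1

lemma Ffam_upward {s : ℕ} {x : Γ} {W T : Set Γ} (h : W ∈ Ffam 𝓑 U Λ s x)
    (hWT : W ⊆ T) (hT : T ⊆ U) : T ∈ Ffam 𝓑 U Λ s x := by
  induction s with
  | zero =>
      obtain ⟨_, B, hB, hxB, hBW⟩ := h
      exact ⟨hT, B, hB, hxB, hBW.trans hWT⟩
  | succ s ih =>
      rcases h with h | ⟨_, p, hp, h1, h2, hsub⟩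
      · exact Or.inl (ih h)
      · exact Or.inr ⟨hT, p, hp, h1, h2, hsub.trans hWT⟩

lemma Ffam_principal {s : ℕ} {w : Γ} (hw : w ∈ U) {W : Set Γ}
    (h : W ∈ Ffam 𝓑 U Λ s w) : w ∈ W := by
  induction s generalizing W with
  | zero =>
      obtain ⟨_, B, hB, hxB, hBW⟩ := h
      exact hBW ⟨hxB, hw⟩
  | succ s ih =>
      rcases h with h | ⟨_, p, hp, h1, h2, hsub⟩
      · exact ih h
      · exact hsub ⟨ih h1, ih h2⟩

lemma Ffam_stab {s : ℕ} {x : Γ} (h : Ffam 𝓑 U Λ (s + 1) x = Ffam 𝓑 U Λ s x) :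
    ∀ s' ≥ s, Ffam 𝓑 U Λ s' x = Ffam 𝓑 U Λ s x := by
  intro s' hs'
  induction s' with
  | zero =>
      have hs0 : s = 0 := Nat.le_zero.mp hs'
      subst hs0; rfl
  | succ s' ih =>
      rcases Nat.lt_or_ge s s' with hlt | hge
      · have heq := ih (by omega)
        show Ffam 𝓑 U Λ s' x ∪ _ = _
        rw [heq]
        have : Ffam 𝓑 U Λ (s + 1) x = Ffam 𝓑 U Λ s x ∪
            {W | W ⊆ U ∧ ∃ p ∈ Λ, p.1 ∈ Ffam 𝓑 U Λ s x ∧ p.2 ∈ Ffam 𝓑 U Λ s x ∧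
              p.1 ∩ p.2 ⊆ W} := rfl
        rw [← this, h]
      · have : s = s' ∨ s = s' + 1 := by omega
        rcases this with rfl | rfl
        · exact h
        · rfl

end Semantics

section KeyLemma

variable {Γ : Type*}

lemma covers_empty_mem {𝓑 : Set (Set Γ)} {A : Set Γ} {Λ : Finset (Set Γ × Set Γ)}
    (hA₂ : A ≠ Set.univ) (hΛ : Covers A 𝓑 Λ) {a : Γ} (ha : a ∈ A) :
    ∅ ∈ Ffam 𝓑 Aᶜ Λ Λ.card a := by
  classical
  have hU : (Aᶜ : Set Γ).Nonempty := by
    rw [Set.nonempty_compl]; exact hA₂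
  obtain ⟨hΛ1, hΛ2⟩ := hΛ
  -- there is a generator containing a
  have hBa : ∃ B ∈ 𝓑, a ∈ B := by
    by_contra hno
    push_neg at hno
    refine hΛ2 ⟨{Aᶜ}, a, ?_, ha, ?_, ?_⟩
    · refine ⟨⟨Aᶜ, rfl⟩, ?_, ?_, ?_⟩
      · intro S hS; rw [Set.mem_singleton_iff] at hS; exact hS ▸ le_rfl
      · intro S hS T hST hT
        rw [Set.mem_singleton_iff] at hS ⊢
        exact le_antisymm hT (hS ▸ hST)
      · intro h0
        rw [Set.mem_singleton_iff] at h0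
        exact hU.ne_empty h0.symm
    · intro B hB haB
      exact absurd haB (hno B hB)
    · intro p _ h1 h2
      rw [Set.mem_singleton_iff] at h1 h2 ⊢
      rw [h1, h2, Set.inter_self]
  obtain ⟨B₀, hB₀, haB₀⟩ := hBa
  -- ∅ eventually appears
  have hex : ∃ s, ∅ ∈ Ffam 𝓑 Aᶜ Λ s a := by
    by_contra hno
    push_neg at hno
    refine hΛ2 ⟨{W | ∃ s, W ∈ Ffam 𝓑 Aᶜ Λ s a}, a, ?_, ha, ?_, ?_⟩
    · refine ⟨⟨B₀ ∩ Aᶜ, 0, ?_⟩, ?_, ?_, ?_⟩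
      · exact ⟨Set.inter_subset_right, B₀, hB₀, haB₀, le_rfl⟩
      · rintro S ⟨s, hS⟩; exact Ffam_subset_U hS
      · rintro S ⟨s, hS⟩ T hST hT; exact ⟨s, Ffam_upward hS hST hT⟩
      · rintro ⟨s, hS⟩; exact hno s hS
    · intro B hB haB
      exact ⟨0, Set.inter_subset_right, B, hB, haB, le_rfl⟩
    · rintro p hp ⟨s₁, h1⟩ ⟨s₂, h2⟩
      exact ⟨max s₁ s₂ + 1, Or.inr ⟨Set.inter_subset_left.trans (hΛ1 p hp).1, p, hp,
        Ffam_mono (le_max_left _ _) a h1, Ffam_mono (le_max_right _ _) a h2, le_rfl⟩⟩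
  -- minimal such stage
  set s := Nat.find hex with hs_def
  have hs_spec : ∅ ∈ Ffam 𝓑 Aᶜ Λ s a := Nat.find_spec hex
  by_cases hsr : s ≤ Λ.card
  · exact Ffam_mono hsr a hs_spec
  push_neg at hsr
  exfalso
  -- fired pairs at stage i
  set fired : ℕ → Finset (Set Γ × Set Γ) := fun i =>
    Λ.filter (fun p => p.1 ∈ Ffam 𝓑 Aᶜ Λ i a ∧ p.2 ∈ Ffam 𝓑 Aᶜ Λ i a) with hfired
  have claim1 : ∀ i, i + 1 ≤ s → Ffam 𝓑 Aᶜ Λ (i + 1) a ≠ Ffam 𝓑 Aᶜ Λ i a := by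
    intro i hi heq
    have := Ffam_stab heq s (by omega)
    exact Nat.find_min hex (show i < s by omega) (this ▸ hs_spec)
  have fmono : ∀ i j, i ≤ j → fired i ⊆ fired j := by
    intro i j hij
    intro p hp
    simp only [hfired, Finset.mem_filter] at hp ⊢
    exact ⟨hp.1, Ffam_mono hij a hp.2.1, Ffam_mono hij a hp.2.2⟩
  have claim3 : ∀ i, Ffam 𝓑 Aᶜ Λ (i + 2) a ≠ Ffam 𝓑 Aᶜ Λ (i + 1) a →
      fired i ≠ fired (i + 1) := by
    intro i hne heq
    apply hne
    apply le_antisymm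
    · intro W hW
      rcases hW with hW | ⟨hWU, p, hp, h1, h2, hsub⟩
      · exact hW
      · have hpf : p ∈ fired (i + 1) := Finset.mem_filter.mpr ⟨hp, h1, h2⟩
        rw [← heq] at hpf
        obtain ⟨_, h1', h2'⟩ := Finset.mem_filter.mp hpf
        exact Or.inr ⟨hWU, p, hp, h1', h2', hsub⟩
    · exact Ffam_subset_succ _ a
  have claim4 : Ffam 𝓑 Aᶜ Λ 1 a ≠ Ffam 𝓑 Aᶜ Λ 0 a → (fired 0).Nonempty := by
    intro hne
    have hnsub : ¬ Ffam 𝓑 Aᶜ Λ 1 a ⊆ Ffam 𝓑 Aᶜ Λ 0 a := by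
      intro hsub
      exact hne (le_antisymm hsub (Ffam_subset_succ 0 a))
    obtain ⟨W, hW1, hW0⟩ := Set.not_subset.mp hnsub
    rcases hW1 with hW | ⟨_, p, hp, h1, h2, _⟩
    · exact absurd hW hW0
    · exact ⟨p, Finset.mem_filter.mpr ⟨hp, h1, h2⟩⟩
  have claim5 : ∀ i, i + 1 ≤ s → i + 1 ≤ (fired i).card := by
    intro i
    induction i with
    | zero =>
        intro hi
        exact Finset.Nonempty.card_pos (claim4 (claim1 0 hi))
    | succ i ih =>
        intro hi
        have h1 := claim1 (i + 1) hi
        have h2 := claim3 i h1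
        have hss : fired i ⊂ fired (i + 1) :=
          lt_of_le_of_ne (fmono i (i + 1) (by omega)) h2
        have := Finset.card_lt_card hss
        have := ih (by omega)
        omega
  have hcard : s ≤ (fired (s - 1)).card := by
    have := claim5 (s - 1) (by omega)
    omega
  have : (fired (s - 1)).card ≤ Λ.card := Finset.card_le_card (Finset.filter_subset _ _)
  omega

end KeyLemma

section Csets

variable {Γ : Type*}

/-- The circuit-level sets: `Cfam s W` is the set of `x` whose hierarchy contains `W`
at stage `s`. -/
def Cfam (𝓑 : Set (Set Γ)) (U : Set Γ) (Λ : Finset (Set Γ × Set Γ)) (s : ℕ)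
    (W : Set Γ) : Set Γ :=
  {x | W ∈ Ffam 𝓑 U Λ s x}

variable {𝓑 : Set (Set Γ)} {U : Set Γ} {Λ : Finset (Set Γ × Set Γ)}

lemma Cfam_zero {W : Set Γ} (hW : W ⊆ U) :
    Cfam 𝓑 U Λ 0 W = ⋃₀ {B | B ∈ 𝓑 ∧ B ∩ U ⊆ W} := by
  ext x
  constructor
  · rintro ⟨_, B, hB, hxB, hBW⟩
    exact ⟨B, ⟨hB, hBW⟩, hxB⟩
  · rintro ⟨B, ⟨hB, hBW⟩, hxB⟩
    exact ⟨hW, B, hB, hxB, hBW⟩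

lemma Cfam_succ {W : Set Γ} (hW : W ⊆ U) (s : ℕ) :
    Cfam 𝓑 U Λ (s + 1) W = Cfam 𝓑 U Λ s W ∪
      ⋃₀ {I | ∃ p ∈ Λ, p.1 ∩ p.2 ⊆ W ∧ I = Cfam 𝓑 U Λ s p.1 ∩ Cfam 𝓑 U Λ s p.2} := by
  ext x
  constructor
  · rintro (h | ⟨_, p, hp, h1, h2, hsub⟩)
    · exact Or.inl h
    · exact Or.inr ⟨_, ⟨p, hp, hsub, rfl⟩, h1, h2⟩
  · rintro (h | ⟨_, ⟨p, hp, hsub, rfl⟩, h1, h2⟩)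
    · exact Or.inl h
    · exact Or.inr ⟨hW, p, hp, h1, h2, hsub⟩

lemma Cfam_final {A : Set Γ} (hA₂ : A ≠ Set.univ) (hΛ : Covers A 𝓑 Λ) :
    Cfam 𝓑 Aᶜ Λ Λ.card ∅ = A := by
  ext x
  constructor
  · intro hx
    by_contra hxA
    exact (Ffam_principal (U := Aᶜ) hxA hx).elim
  · intro hx
    exact covers_empty_mem hA₂ hΛ hx

end Csets

section Build

variable {Γ : Type*} [Fintype Γ] {𝓑 : Set (Set Γ)} {U : Set Γ}
  {Λ : Finset (Set Γ × Set Γ)}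

lemma sUnion_diff_empty (G : Set (Set Γ)) : ⋃₀ (G \ {∅}) = ⋃₀ G := by
  apply le_antisymm
  · exact Set.sUnion_mono Set.diff_subset
  · rintro x ⟨W, hW, hxW⟩
    refine ⟨W, ⟨hW, ?_⟩, hxW⟩
    rintro rfl
    exact hxW

lemma add_unions {k : ℕ} {S : Set (Set Γ)} {L : Set Γ}
    (h : Computes 𝓑 k S L) (G : Set Γ → Set (Set Γ)) (V : Set (Set Γ))
    (hG : ∀ W ∈ V, G W ⊆ 𝓑 ∪ S ∪ {∅}) :
    ∃ S' L', S ⊆ S' ∧ Computes 𝓑 k S' L' ∧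
      ∀ W ∈ V, ⋃₀ (G W) ≠ ∅ → ⋃₀ (G W) ∈ S' := by
  classical
  have hV : V.Finite := Set.toFinite V
  revert hG
  refine Set.Finite.induction_on (motive := fun V _ =>
      (∀ W ∈ V, G W ⊆ 𝓑 ∪ S ∪ {∅}) → ∃ S' L', S ⊆ S' ∧ Computes 𝓑 k S' L' ∧
        ∀ W ∈ V, ⋃₀ (G W) ≠ ∅ → ⋃₀ (G W) ∈ S') V hV
    (fun _ => ⟨S, L, le_rfl, h, fun W hW => absurd hW (Set.notMem_empty W)⟩) ?_
  intro a V ha hVfin ih hG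
  obtain ⟨S', L', hSS', hc, hmem⟩ := ih (fun W hW => hG W (Set.mem_insert_of_mem a hW))
  by_cases hane : ⋃₀ (G a) = ∅
  · refine ⟨S', L', hSS', hc, ?_⟩
    intro W hW hne
    rcases hW with rfl | hW
    · exact absurd hane hne
    · exact hmem W hW hne
  · set T : Finset (Set Γ) := (G a \ {∅}).toFinset with hT_def
    have hTcoe : (↑T : Set (Set Γ)) = G a \ {∅} := Set.coe_toFinset _
    have hTU : ⋃₀ (↑T : Set (Set Γ)) = ⋃₀ (G a) := by
      rw [hTcoe]; exact sUnion_diff_empty (G a)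
    have hTne : T.Nonempty := by
      rw [← Finset.coe_nonempty, hTcoe]
      by_contra hemp
      rw [Set.not_nonempty_iff_eq_empty] at hemp
      apply hane
      rw [← sUnion_diff_empty (G a), hemp, Set.sUnion_empty]
    have hTsub : (↑T : Set (Set Γ)) ⊆ 𝓑 ∪ S' := by
      rw [hTcoe]
      rintro X ⟨hX, hXne⟩
      rcases hG a (Set.mem_insert a V) hX with (hX' | hX') | hX'
      · exact Or.inl hX'
      · exact Or.inr (hSS' hX')
      · exact absurd hX' hXne
    have hc2 := hc.sUnion T hTne hTsub
    rw [hTU] at hc2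
    refine ⟨S' ∪ {⋃₀ (G a)}, ⋃₀ (G a), fun X hX => Or.inl (hSS' hX), hc2, ?_⟩
    intro W hW hne
    rcases hW with rfl | hW
    · exact Or.inr rfl
    · exact Or.inl (hmem W hW hne)

lemma add_inters {k : ℕ} {S : Set (Set Γ)} {L : Set Γ} {s : ℕ}
    (hc : Computes 𝓑 k S L) (Λ' : Finset (Set Γ × Set Γ))
    (hop : ∀ p ∈ Λ', Cfam 𝓑 U Λ s p.1 ≠ ∅ → Cfam 𝓑 U Λ s p.2 ≠ ∅ →
      Cfam 𝓑 U Λ s p.1 ∈ S ∧ Cfam 𝓑 U Λ s p.2 ∈ S) :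
    ∃ S' L', S ⊆ S' ∧ Computes 𝓑 (k + Λ'.card) S' L' ∧
      ∀ p ∈ Λ', Cfam 𝓑 U Λ s p.1 ≠ ∅ → Cfam 𝓑 U Λ s p.2 ≠ ∅ →
        Cfam 𝓑 U Λ s p.1 ∩ Cfam 𝓑 U Λ s p.2 ∈ S' := by
  classical
  induction Λ' using Finset.induction_on with
  | empty => exact ⟨S, L, le_rfl, by simpa using hc,
      fun p hp => absurd hp (Finset.notMem_empty p)⟩
  | @insert p Λ' hp ih =>
      obtain ⟨S', L', hSS', hc', hints⟩ :=
        ih (fun q hq => hop q (Finset.mem_insert_of_mem hq))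
      rw [Finset.card_insert_of_notMem hp]
      by_cases h1 : Cfam 𝓑 U Λ s p.1 = ∅
      · refine ⟨S', L', hSS', hc'.mono le_rfl (by omega), ?_⟩
        intro q hq hq1 hq2
        rcases Finset.mem_insert.mp hq with rfl | hq
        · exact absurd h1 hq1
        · exact hints q hq hq1 hq2
      by_cases h2 : Cfam 𝓑 U Λ s p.2 = ∅
      · refine ⟨S', L', hSS', hc'.mono le_rfl (by omega), ?_⟩
        intro q hq hq1 hq2
        rcases Finset.mem_insert.mp hq with rfl | hq
        · exact absurd h2 hq2
        · exact hints q hq hq1 hq2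
      · obtain ⟨hm1, hm2⟩ := hop p (Finset.mem_insert_self p Λ') h1 h2
        have hc2 := hc'.inter (Or.inr (hSS' hm1)) (Or.inr (hSS' hm2))
        refine ⟨S' ∪ {Cfam 𝓑 U Λ s p.1 ∩ Cfam 𝓑 U Λ s p.2}, _,
          fun X hX => Or.inl (hSS' hX), by simpa [Nat.add_assoc] using hc2, ?_⟩
        intro q hq hq1 hq2
        rcases Finset.mem_insert.mp hq with rfl | hq
        · exact Or.inr rfl
        · exact Or.inl (hints q hq hq1 hq2)

lemma build_stage (h𝓑 : 𝓑.Nonempty)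
    (hsub : ∀ p ∈ Λ, p.1 ⊆ U ∧ p.2 ⊆ U) (s : ℕ) :
    ∃ S L, Computes 𝓑 (s * Λ.card) S L ∧
      ∀ W, (W = ∅ ∨ ∃ p ∈ Λ, W = p.1 ∨ W = p.2) → Cfam 𝓑 U Λ s W ≠ ∅ →
        Cfam 𝓑 U Λ s W ∈ S := by
  classical
  have hNU : ∀ W : Set Γ, (W = ∅ ∨ ∃ p ∈ Λ, W = p.1 ∨ W = p.2) → W ⊆ U := by
    rintro W (rfl | ⟨p, hp, rfl | rfl⟩)
    · exact Set.empty_subset U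
    · exact (hsub p hp).1
    · exact (hsub p hp).2
  induction s with
  | zero =>
      obtain ⟨B₀, hB₀⟩ := h𝓑
      obtain ⟨S', L', _, hc, hmem⟩ := add_unions (Computes.init hB₀)
        (fun W => {B | B ∈ 𝓑 ∧ B ∩ U ⊆ W})
        {W | W = ∅ ∨ ∃ p ∈ Λ, W = p.1 ∨ W = p.2}
        (fun W _ B hB => Or.inl (Or.inl hB.1))
      refine ⟨S', L', by simpa using hc, ?_⟩
      intro W hW hne
      rw [Cfam_zero (hNU W hW)] at hne ⊢
      exact hmem W hW hne
  | succ s ih =>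
      obtain ⟨S, L, hc, hmem⟩ := ih
      obtain ⟨S', L', hSS', hc', hints⟩ := add_inters (U := U) (s := s) hc Λ
        (fun p hp h1 h2 =>
          ⟨hmem p.1 (Or.inr ⟨p, hp, Or.inl rfl⟩) h1,
           hmem p.2 (Or.inr ⟨p, hp, Or.inr rfl⟩) h2⟩)
      have hc'' : Computes 𝓑 ((s + 1) * Λ.card) S' L' := by
        refine hc'.mono le_rfl ?_
        rw [Nat.succ_mul]
      have hGside : ∀ W ∈ {W : Set Γ | W = ∅ ∨ ∃ p ∈ Λ, W = p.1 ∨ W = p.2},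
          ({Cfam 𝓑 U Λ s W} ∪
            {I | ∃ p ∈ Λ, p.1 ∩ p.2 ⊆ W ∧ I = Cfam 𝓑 U Λ s p.1 ∩ Cfam 𝓑 U Λ s p.2})
            ⊆ 𝓑 ∪ S' ∪ {∅} := by
        rintro W hW X (rfl | ⟨p, hp, hpsub, rfl⟩)
        · by_cases hXe : Cfam 𝓑 U Λ s W = ∅
          · exact Or.inr (by simp [hXe])
          · exact Or.inl (Or.inr (hSS' (hmem W hW hXe)))
        · by_cases h1 : Cfam 𝓑 U Λ s p.1 = ∅
          · exact Or.inr (by simp [h1])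
          by_cases h2 : Cfam 𝓑 U Λ s p.2 = ∅
          · exact Or.inr (by simp [h2])
          · exact Or.inl (Or.inr (hints p hp h1 h2))
      obtain ⟨S'', L'', hS'S'', hc3, hmem3⟩ := add_unions hc''
        (fun W => {Cfam 𝓑 U Λ s W} ∪
          {I | ∃ p ∈ Λ, p.1 ∩ p.2 ⊆ W ∧ I = Cfam 𝓑 U Λ s p.1 ∩ Cfam 𝓑 U Λ s p.2})
        {W | W = ∅ ∨ ∃ p ∈ Λ, W = p.1 ∨ W = p.2} hGside
      refine ⟨S'', L'', hc3, ?_⟩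
      intro W hW hne
      have heq : Cfam 𝓑 U Λ (s + 1) W =
          ⋃₀ ({Cfam 𝓑 U Λ s W} ∪
            {I | ∃ p ∈ Λ, p.1 ∩ p.2 ⊆ W ∧ I = Cfam 𝓑 U Λ s p.1 ∩ Cfam 𝓑 U Λ s p.2}) := by
        rw [Set.sUnion_union, Set.sUnion_singleton]
        exact Cfam_succ (hNU W hW) s
      rw [heq] at hne ⊢
      exact hmem3 W hW hne

end Build

theorem fusion_upper_bound' {Γ : Type*} [Fintype Γ] [Nonempty Γ]
    (𝓑 : Set (Set Γ)) (h𝓑 : 𝓑.Nonempty)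
    (A : Set Γ) (hA₁ : A ≠ ∅) (hA₂ : A ≠ Set.univ) :
    Dcap A 𝓑 ≤ (rho A 𝓑) ^ 2 := by
  classical
  set RS := {m : ℕ∞ | ∃ Λ : Finset (Set Γ × Set Γ), Covers A 𝓑 Λ ∧
    m = ((Λ.card : ℕ) : ℕ∞)} with hRS
  by_cases hne : RS.Nonempty
  · have hmem := csInf_mem hne
    obtain ⟨Λ, hcov, heq⟩ := hmem
    have hrho : rho A 𝓑 = ((Λ.card : ℕ) : ℕ∞) := heq
    obtain ⟨S, L, hc, hmemS⟩ := build_stage (U := Aᶜ) (Λ := Λ) h𝓑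
      (fun p hp => hcov.1 p hp) Λ.card
    have hAC : Cfam 𝓑 Aᶜ Λ Λ.card ∅ = A := Cfam_final hA₂ hcov
    have hAS : A ∈ S := by
      have := hmemS ∅ (Or.inl rfl) (by rw [hAC]; exact hA₁)
      rwa [hAC] at this
    have hc2 := hc.union (Or.inr hAS) (Or.inr hAS)
    rw [Set.union_self] at hc2
    obtain ⟨t, seq, ops, h1, _, h3, h4⟩ := hc2
    have hD : Dcap A 𝓑 ≤ ((interCount ops : ℕ) : ℕ∞) := by
      apply sInf_le
      exact ⟨t, seq, ops, h1, h3, rfl⟩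
    refine hD.trans ?_
    rw [hrho]
    have : ((interCount ops : ℕ) : ℕ∞) ≤ ((Λ.card * Λ.card : ℕ) : ℕ∞) :=
      Nat.cast_le.mpr h4
    refine this.trans ?_
    rw [pow_two, ← Nat.cast_mul]
  · have hrho : rho A 𝓑 = ⊤ := by
      rw [rho, ← hRS, Set.not_nonempty_iff_eq_empty.mp hne, sInf_empty]
    rw [hrho]
    have h2 : (⊤ : ℕ∞) ^ 2 = ⊤ := by
      rw [pow_two]; decide
    rw [h2]
    exact le_top

/-- Fusion upper bound: for a nonempty finite ground set `Γ`, a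
nonempty family `𝓑` of subsets of `Γ`, and a non-trivial `A ⊆ Γ`,
`D_∩(A | 𝓑) ≤ ρ(A, 𝓑)²`. -/
theorem fusion_upper_bound {Γ : Type*} [Fintype Γ] [Nonempty Γ]
    (𝓑 : Set (Set Γ)) (h𝓑 : 𝓑.Nonempty)
    (A : Set Γ) (hA₁ : A ≠ ∅) (hA₂ : A ≠ Set.univ) :
    Dcap A 𝓑 ≤ (rho A 𝓑) ^ 2 := by
  exact fusion_upper_bound' 𝓑 h𝓑 A hA₁ hA₂
end

section
/- Let Γ be a nonempty finite set, let 𝓑 be a nonempty family of subsets of Γ, and let A ⊆ Γ be non-trivial. Then ρ(A, 𝓑) = D°_∩(A | 𝓑); that is, the cover complexity of A with respect to 𝓑 is exactly equal to its cyclic intersection complexity. -/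
open Set Filter

section Aux

variable {Γ : Type*}

lemma cycEval_succ {t : ℕ} (arg1 arg2 : Fin t → Fin t ⊕ Set Γ) (ops : Fin t → Bool)
    (j : ℕ) (i : Fin t) :
    cycEval arg1 arg2 ops (j+1) i = cycEval arg1 arg2 ops j i ∪
      (if ops i = true then
          Sum.elim (cycEval arg1 arg2 ops j) id (arg1 i) ∩
            Sum.elim (cycEval arg1 arg2 ops j) id (arg2 i)
        else
          Sum.elim (cycEval arg1 arg2 ops j) id (arg1 i) ∪
            Sum.elim (cycEval arg1 arg2 ops j) id (arg2 i)) := rfl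

lemma cycEval_mono_succ {t : ℕ} (arg1 arg2 : Fin t → Fin t ⊕ Set Γ) (ops : Fin t → Bool)
    (j : ℕ) (i : Fin t) : cycEval arg1 arg2 ops j i ⊆ cycEval arg1 arg2 ops (j+1) i := by
  rw [cycEval_succ]; exact Set.subset_union_left

lemma cycEval_mono {t : ℕ} (arg1 arg2 : Fin t → Fin t ⊕ Set Γ) (ops : Fin t → Bool)
    {j j' : ℕ} (h : j ≤ j') (i : Fin t) :
    cycEval arg1 arg2 ops j i ⊆ cycEval arg1 arg2 ops j' i := by
  induction j' with
  | zero => simpa [Nat.le_zero.mp h]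
  | succ n ih =>
    rcases Nat.lt_or_ge j (n+1) with h'|h'
    · exact (ih (Nat.lt_succ_iff.mp h')).trans (cycEval_mono_succ _ _ _ _ _)
    · have : j = n+1 := le_antisymm h h'
      subst this; rfl

/-- Direction 1: `ρ(A,𝓑) ≤` the intersection count of any convergent cyclic sequence. -/
lemma rho_le_interCount {t : ℕ} (𝓑 : Set (Set Γ)) (A : Set Γ)
    (arg1 arg2 : Fin (t+1) → Fin (t+1) ⊕ Set Γ) (ops : Fin (t+1) → Bool)
    (hargs : ArgsOK 𝓑 arg1 arg2) (j₀ : ℕ)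
    (hconv : ∀ j' ≥ j₀, cycEval arg1 arg2 ops j' (Fin.last t) = A) :
    rho A 𝓑 ≤ ((interCount ops : ℕ) : ℕ∞) := by
  classical
  set ev := cycEval arg1 arg2 ops with hev
  set L : Fin (t+1) → Set Γ := fun i => ⋃ j, ev j i with hL
  set elimL : (Fin (t+1) ⊕ Set Γ) → Set Γ := Sum.elim L id with helimL
  have elimJ_le : ∀ (j : ℕ) (x : Fin (t+1) ⊕ Set Γ),
      Sum.elim (ev j) id x ⊆ elimL x := by
    intro j x; cases x with
    | inl i' => exact Set.subset_iUnion (fun j => ev j i') j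
    | inr B => exact subset_rfl
  have elimJ_mono : ∀ {j j' : ℕ}, j ≤ j' → ∀ (x : Fin (t+1) ⊕ Set Γ),
      Sum.elim (ev j) id x ⊆ Sum.elim (ev j') id x := by
    intro j j' h x; cases x with
    | inl i' => exact cycEval_mono arg1 arg2 ops h i'
    | inr B => exact subset_rfl
  have elimL_eq : ∀ x, elimL x = ⋃ j, Sum.elim (ev j) id x := by
    intro x; cases x with
    | inl i' => rfl
    | inr B => exact (Set.iUnion_const B).symm
  -- the limit of a node contains arguments' limits appropriately
  have harg_sub : ∀ (i : Fin (t+1)) (j : ℕ), ops i = false →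
      Sum.elim (ev j) id (arg1 i) ∪ Sum.elim (ev j) id (arg2 i) ⊆ L i := by
    intro i j hop
    have : Sum.elim (ev j) id (arg1 i) ∪ Sum.elim (ev j) id (arg2 i) ⊆ ev (j+1) i := by
      rw [hev, cycEval_succ, hop]; simp
    exact this.trans (Set.subset_iUnion (fun j => ev j i) (j+1))
  have harg_sub' : ∀ (i : Fin (t+1)), ops i = true →
      elimL (arg1 i) ∩ elimL (arg2 i) ⊆ L i := by
    intro i hop y hy
    obtain ⟨hy1, hy2⟩ := hy
    rw [elimL_eq] at hy1 hy2
    obtain ⟨S1, ⟨m1, rfl⟩, hm1⟩ := hy1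
    obtain ⟨S2, ⟨m2, rfl⟩, hm2⟩ := hy2
    have h1 : y ∈ Sum.elim (ev (max m1 m2)) id (arg1 i) :=
      elimJ_mono (le_max_left _ _) _ hm1
    have h2 : y ∈ Sum.elim (ev (max m1 m2)) id (arg2 i) :=
      elimJ_mono (le_max_right _ _) _ hm2
    have : y ∈ ev (max m1 m2 + 1) i := by
      rw [hev, cycEval_succ, hop]; simp; right; exact ⟨h1, h2⟩
    exact Set.mem_iUnion.mpr ⟨_, this⟩
  set Λ : Finset (Set Γ × Set Γ) :=
    (Finset.univ.filter fun i => ops i = true).image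
      (fun i => (elimL (arg1 i) ∩ Aᶜ, elimL (arg2 i) ∩ Aᶜ)) with hΛ
  have hcov : Covers A 𝓑 Λ := by
    constructor
    · intro p hp
      rw [hΛ, Finset.mem_image] at hp
      obtain ⟨i, _, rfl⟩ := hp
      exact ⟨Set.inter_subset_right, Set.inter_subset_right⟩
    · rintro ⟨F, a, hsf, ha, habove, hpres⟩
      obtain ⟨hFne, hFsub, hFup, hFempty⟩ := hsf
      -- the key induction
      have main : ∀ (j : ℕ) (i : Fin (t+1)), a ∈ ev j i → L i ∩ Aᶜ ∈ F := by
        intro j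
        induction j with
        | zero => intro i h; simp [hev, cycEval] at h
        | succ j IH =>
          intro i h
          rw [hev, cycEval_succ] at h
          rcases h with h | h
          · exact IH i h
          · have side : ∀ x : Fin (t+1) ⊕ Set Γ, (x = arg1 i ∨ x = arg2 i) →
                a ∈ Sum.elim (ev j) id x → elimL x ∩ Aᶜ ∈ F := by
              intro x hx hax
              cases x with
              | inl i' => exact IH i' hax
              | inr B =>
                have hB : B ∈ 𝓑 := by
                  rcases hx with hx | hx
                  · exact (hargs i).1 B hx.symm
                  · exact (hargs i).2 B hx.symm
                exact habove B hB hax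
            by_cases hop : ops i = true
            · rw [if_pos hop] at h
              have h1 := side (arg1 i) (Or.inl rfl) h.1
              have h2 := side (arg2 i) (Or.inr rfl) h.2
              have hpair : (elimL (arg1 i) ∩ Aᶜ, elimL (arg2 i) ∩ Aᶜ) ∈ Λ := by
                rw [hΛ, Finset.mem_image]
                exact ⟨i, Finset.mem_filter.mpr ⟨Finset.mem_univ i, hop⟩, rfl⟩
              have := hpres _ hpair h1 h2
              refine hFup _ this _ ?_ Set.inter_subset_right
              refine Set.subset_inter ?_ (by intro y hy; exact hy.1.2)
              intro y hy
              exact harg_sub' i hop ⟨hy.1.1, hy.2.1⟩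
            · rw [if_neg hop] at h
              have hx : ∃ x, (x = arg1 i ∨ x = arg2 i) ∧ a ∈ Sum.elim (ev j) id x := by
                rcases h with h | h
                exacts [⟨arg1 i, Or.inl rfl, h⟩, ⟨arg2 i, Or.inr rfl, h⟩]
              obtain ⟨x, hx, hax⟩ := hx
              have hmem := side x hx hax
              refine hFup _ hmem _ ?_ Set.inter_subset_right
              refine Set.inter_subset_inter_left _ ?_
              rw [elimL_eq]
              refine Set.iUnion_subset fun m => ?_
              have hb := eq_false_of_ne_true hop
              intro y hy
              rcases hx with hx | hx
              · exact harg_sub i m hb (Or.inl (hx ▸ hy))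
              · exact harg_sub i m hb (Or.inr (hx ▸ hy))
      have haev : a ∈ ev j₀ (Fin.last t) := by rw [hconv j₀ le_rfl]; exact ha
      have hLlast : L (Fin.last t) ⊆ A := by
        refine Set.iUnion_subset fun j => ?_
        refine (cycEval_mono arg1 arg2 ops (le_max_left j j₀) (Fin.last t)).trans ?_
        exact le_of_eq (hconv (max j j₀) (le_max_right _ _))
      have := main j₀ (Fin.last t) haev
      have hempty : L (Fin.last t) ∩ Aᶜ = ∅ := by
        apply Set.eq_empty_of_subset_empty
        intro y hy
        exact (hy.2 (hLlast hy.1))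
      rw [hempty] at this
      exact hFempty this
  have hmem : ((Λ.card : ℕ) : ℕ∞) ∈
      {m : ℕ∞ | ∃ Λ' : Finset (Set Γ × Set Γ), Covers A 𝓑 Λ' ∧ m = ((Λ'.card : ℕ) : ℕ∞)} :=
    ⟨Λ, hcov, rfl⟩
  refine le_trans (sInf_le hmem) ?_
  have : Λ.card ≤ interCount ops := by
    rw [hΛ, interCount]; exact Finset.card_image_le
  exact_mod_cast this

end Aux
section GEval

variable {ι : Type*} {Γ : Type*}

/-- Generic cyclic evaluation over an arbitrary index type. -/
def gEval (arg1 arg2 : ι → ι ⊕ Set Γ) (ops : ι → Bool) : ℕ → ι → Set Γ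
  | 0 => fun _ => ∅
  | j + 1 => fun i =>
      gEval arg1 arg2 ops j i ∪
        (if ops i = true then
          Sum.elim (gEval arg1 arg2 ops j) id (arg1 i) ∩
            Sum.elim (gEval arg1 arg2 ops j) id (arg2 i)
        else
          Sum.elim (gEval arg1 arg2 ops j) id (arg1 i) ∪
            Sum.elim (gEval arg1 arg2 ops j) id (arg2 i))

/-- One step of the evaluation as a function of current values. -/
def gStep (arg1 arg2 : ι → ι ⊕ Set Γ) (ops : ι → Bool) (V : ι → Set Γ) (i : ι) : Set Γ :=
  if ops i = true then Sum.elim V id (arg1 i) ∩ Sum.elim V id (arg2 i)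
  else Sum.elim V id (arg1 i) ∪ Sum.elim V id (arg2 i)

lemma gEval_succ (arg1 arg2 : ι → ι ⊕ Set Γ) (ops : ι → Bool) (j : ℕ) :
    gEval arg1 arg2 ops (j+1) = fun i =>
      gEval arg1 arg2 ops j i ∪ gStep arg1 arg2 ops (gEval arg1 arg2 ops j) i := rfl

lemma gEval_mono_succ (arg1 arg2 : ι → ι ⊕ Set Γ) (ops : ι → Bool) (j : ℕ) (i : ι) :
    gEval arg1 arg2 ops j i ⊆ gEval arg1 arg2 ops (j+1) i := by
  rw [gEval_succ]; exact Set.subset_union_left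

lemma gEval_le_of_prefixed (arg1 arg2 : ι → ι ⊕ Set Γ) (ops : ι → Bool)
    (V : ι → Set Γ) (hV : ∀ i, gStep arg1 arg2 ops V i ⊆ V i) :
    ∀ j i, gEval arg1 arg2 ops j i ⊆ V i := by
  intro j
  induction j with
  | zero => intro i; simp [gEval]
  | succ j IH =>
    intro i
    rw [gEval_succ]
    have helim : ∀ x : ι ⊕ Set Γ, Sum.elim (gEval arg1 arg2 ops j) id x ⊆ Sum.elim V id x := by
      intro x; cases x with
      | inl i' => exact IH i'
      | inr B => exact subset_rfl
    refine Set.union_subset (IH i) (le_trans ?_ (hV i))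
    unfold gStep
    by_cases hop : ops i = true
    · rw [if_pos hop, if_pos hop]
      exact Set.inter_subset_inter (helim _) (helim _)
    · rw [if_neg hop, if_neg hop]
      exact Set.union_subset_union (helim _) (helim _)

lemma gEval_stab_after (arg1 arg2 : ι → ι ⊕ Set Γ) (ops : ι → Bool) (n : ℕ)
    (h : gEval arg1 arg2 ops (n+1) = gEval arg1 arg2 ops n) :
    ∀ j ≥ n, gEval arg1 arg2 ops j = gEval arg1 arg2 ops n := by
  intro j hj
  obtain ⟨d, rfl⟩ := Nat.exists_eq_add_of_le hj
  induction d with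
  | zero => rfl
  | succ d IH =>
    have : n + (d+1) = (n+d) + 1 := by omega
    rw [this, gEval_succ, IH (by omega)]
    rw [gEval_succ] at h
    exact h

lemma gEval_stabilizes [Finite ι] [Finite Γ] (arg1 arg2 : ι → ι ⊕ Set Γ) (ops : ι → Bool) :
    ∃ n, ∀ j ≥ n, gEval arg1 arg2 ops j = gEval arg1 arg2 ops n := by
  by_contra hcon
  push_neg at hcon
  have hstep : ∀ n, gEval arg1 arg2 ops (n+1) ≠ gEval arg1 arg2 ops n := by
    intro n hn
    obtain ⟨j, _, hne⟩ := hcon n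
    exact hne (gEval_stab_after arg1 arg2 ops n hn j ‹_›)
  have hmono : ∀ n, gEval arg1 arg2 ops n < gEval arg1 arg2 ops (n+1) := by
    intro n
    refine lt_of_le_of_ne (fun i => gEval_mono_succ arg1 arg2 ops n i) (Ne.symm (hstep n))
  have hsm : StrictMono (gEval arg1 arg2 ops) := strictMono_nat_of_lt_succ hmono
  obtain ⟨x, y, hxy, hfeq⟩ := Finite.exists_ne_map_eq_of_infinite (gEval arg1 arg2 ops)
  exact hxy (hsm.injective hfeq)

/-- Transport between `cycEval` (on `Fin (t+1)`) and `gEval` (on `ι`). -/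
lemma cycEval_eq_gEval {t : ℕ} (e : Fin (t+1) ≃ ι)
    (garg1 garg2 : ι → ι ⊕ Set Γ) (gops : ι → Bool) (j : ℕ) (i : Fin (t+1)) :
    cycEval (fun i => Sum.map e.symm id (garg1 (e i))) (fun i => Sum.map e.symm id (garg2 (e i)))
      (fun i => gops (e i)) j i = gEval garg1 garg2 gops j (e i) := by
  induction j generalizing i with
  | zero => rfl
  | succ j IH =>
    have helim : ∀ x : ι ⊕ Set Γ,
        Sum.elim (cycEval (fun i => Sum.map e.symm id (garg1 (e i)))
            (fun i => Sum.map e.symm id (garg2 (e i))) (fun i => gops (e i)) j) id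
          (Sum.map e.symm id x) = Sum.elim (gEval garg1 garg2 gops j) id x := by
      intro x; cases x with
      | inl k => simpa using IH (e.symm k)
      | inr B => rfl
    show cycEval _ _ _ j i ∪ _ = _
    rw [IH i]
    show _ = gEval garg1 garg2 gops j (e i) ∪ _
    congr 1
    by_cases hop : gops (e i) = true <;> simp [hop, helim]

end GEval
section Construction

variable {Γ : Type*} [Fintype Γ]

/-- Target set for a union-chain component: what its intersection with `U = Aᶜ`
must be contained in. -/
def tgtC (A : Set Γ) {Λ : Finset (Set Γ × Set Γ)}
    (c : Option {p // p ∈ Λ} × Bool) : Set Γ :=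
  match c with
  | (some p, true) => p.val.1
  | (some p, false) => p.val.2
  | (none, _) => ∅

open Classical in
/-- The list of inputs of a union-chain component. -/
noncomputable def inputListC (𝓑 : Set (Set Γ)) (A : Set Γ) {Λ : Finset (Set Γ × Set Γ)}
    (c : Option {p // p ∈ Λ} × Bool) : List ({p // p ∈ Λ} ⊕ Set Γ) :=
  ((𝓑.toFinite.toFinset.filter (fun B => B ∩ Aᶜ ⊆ tgtC A c)).toList.map Sum.inr) ++
  ((Finset.univ.filter (fun q : {p // p ∈ Λ} => q.val.1 ∩ q.val.2 ⊆ tgtC A c)).toList.map Sum.inl)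

lemma mem_inputListC {𝓑 : Set (Set Γ)} {A : Set Γ} {Λ : Finset (Set Γ × Set Γ)}
    {c : Option {p // p ∈ Λ} × Bool} {x : {p // p ∈ Λ} ⊕ Set Γ} :
    x ∈ inputListC 𝓑 A c ↔
      (∃ B, x = Sum.inr B ∧ B ∈ 𝓑 ∧ B ∩ Aᶜ ⊆ tgtC A c) ∨
      (∃ q, x = Sum.inl q ∧ q.val.1 ∩ q.val.2 ⊆ tgtC A c) := by
  classical
  simp only [inputListC, List.mem_append, List.mem_map, Finset.mem_toList, Finset.mem_filter,
    Set.Finite.mem_toFinset, Finset.mem_univ, true_and]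
  constructor
  · rintro (⟨B, ⟨hB1, hB2⟩, rfl⟩ | ⟨q, hq, rfl⟩)
    · exact Or.inl ⟨B, rfl, hB1, hB2⟩
    · exact Or.inr ⟨q, rfl, hq⟩
  · rintro (⟨B, rfl, hB1, hB2⟩ | ⟨q, rfl, hq⟩)
    · exact Or.inl ⟨B, ⟨hB1, hB2⟩, rfl⟩
    · exact Or.inr ⟨q, hq, rfl⟩

/-- Uniform bound on chain lengths. -/
noncomputable def mC (𝓑 : Set (Set Γ)) (A : Set Γ) (Λ : Finset (Set Γ × Set Γ)) : ℕ :=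
  Finset.univ.sup (fun c : Option {p // p ∈ Λ} × Bool => (inputListC 𝓑 A c).length)

lemma len_le_mC (𝓑 : Set (Set Γ)) (A : Set Γ) {Λ : Finset (Set Γ × Set Γ)}
    (c : Option {p // p ∈ Λ} × Bool) : (inputListC 𝓑 A c).length ≤ mC 𝓑 A Λ :=
  Finset.le_sup (f := fun c => (inputListC 𝓑 A c).length) (Finset.mem_univ c)

variable (𝓑 : Set (Set Γ)) (A : Set Γ) (Λ : Finset (Set Γ × Set Γ))

/-- The node index type of the constructed cyclic sequence. -/
abbrev iotaC := ((Option {p // p ∈ Λ} × Bool) × Fin (mC 𝓑 A Λ + 1)) ⊕ {p // p ∈ Λ}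

/-- Operation type: intersections exactly at the gate nodes. -/
def gopsC : iotaC 𝓑 A Λ → Bool
  | .inl _ => false
  | .inr _ => true

noncomputable def garg1C : iotaC 𝓑 A Λ → (iotaC 𝓑 A Λ) ⊕ Set Γ
  | .inl (c, i) => .inl (.inl (c, ⟨i.val - 1, lt_of_le_of_lt (Nat.sub_le _ _) i.isLt⟩))
  | .inr p => .inl (.inl ((some p, true), Fin.last _))

/-- Resolve an optional chain input into an argument (defaulting to a self-loop). -/
def resolveC (d : iotaC 𝓑 A Λ) (o : Option ({p // p ∈ Λ} ⊕ Set Γ)) :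
    (iotaC 𝓑 A Λ) ⊕ Set Γ :=
  match o with
  | none => .inl d
  | some (.inl q) => .inl (.inr q)
  | some (.inr B) => .inr B

noncomputable def garg2C : iotaC 𝓑 A Λ → (iotaC 𝓑 A Λ) ⊕ Set Γ
  | .inl (c, i) => resolveC 𝓑 A Λ (.inl (c, ⟨i.val - 1, lt_of_le_of_lt (Nat.sub_le _ _) i.isLt⟩))
      (if i.val = 0 then none else (inputListC 𝓑 A c)[i.val - 1]?)
  | .inr p => .inl (.inl ((some p, false), Fin.last _))

/-- The output node. -/
noncomputable def outC : iotaC 𝓑 A Λ := .inl ((none, true), Fin.last _)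

end Construction
section Dir2

variable {Γ : Type*} [Fintype Γ]

noncomputable def gateEquivC (𝓑 : Set (Set Γ)) (A : Set Γ) (Λ : Finset (Set Γ × Set Γ)) :
    {x : iotaC 𝓑 A Λ // gopsC 𝓑 A Λ x = true} ≃ {p // p ∈ Λ} where
  toFun x := match x with
    | ⟨.inr p, _⟩ => p
    | ⟨.inl _, h⟩ => absurd h (by simp [gopsC])
  invFun p := ⟨.inr p, rfl⟩
  left_inv := by
    rintro ⟨x, h⟩
    cases x with
    | inl z => simp [gopsC] at h
    | inr p => rfl
  right_inv := fun p => rfl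

lemma dcapcyc_le_card (𝓑 : Set (Set Γ)) (A : Set Γ) (hA₂ : A ≠ Set.univ)
    (Λ : Finset (Set Γ × Set Γ)) (hcov : Covers A 𝓑 Λ) :
    DcapCyc A 𝓑 ≤ ((Λ.card : ℕ) : ℕ∞) := by
  classical
  obtain ⟨hΛsub, hnoF⟩ := hcov
  set g1 := garg1C 𝓑 A Λ with hg1
  set g2 := garg2C 𝓑 A Λ with hg2
  set gops := gopsC 𝓑 A Λ with hgops
  obtain ⟨n, hstab⟩ := gEval_stabilizes g1 g2 gops
  set K := gEval g1 g2 gops n with hK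
  have hKpre : ∀ i, gStep g1 g2 gops K i ⊆ K i := by
    intro i
    have h1 : gEval g1 g2 gops (n+1) = K := hstab (n+1) (by omega)
    conv_rhs => rw [← h1]
    rw [gEval_succ]
    exact Set.subset_union_right
  -- gate nodes compute (at least) the intersection of their chains
  have hgate : ∀ q : {p // p ∈ Λ},
      K (.inl ((some q, true), Fin.last _)) ∩ K (.inl ((some q, false), Fin.last _)) ⊆
        K (.inr q) := by
    intro q
    have h := hKpre (.inr q)
    unfold gStep at h
    simp only [hgops, hg1, hg2, gopsC, garg1C, garg2C, if_pos, Sum.elim_inl] at h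
    exact h
  -- chain nodes increase along the chain
  have chainStep : ∀ (c : Option {p // p ∈ Λ} × Bool) (i : Fin (mC 𝓑 A Λ + 1)),
      K (.inl (c, ⟨i.val - 1, lt_of_le_of_lt (Nat.sub_le _ _) i.isLt⟩)) ⊆ K (.inl (c, i)) := by
    intro c i
    have h := hKpre (.inl (c, i))
    unfold gStep at h
    simp only [hgops, hg1, gopsC, garg1C, Sum.elim_inl] at h
    exact le_trans Set.subset_union_left (le_trans (le_of_eq rfl) h)
  have chainUp : ∀ (c : Option {p // p ∈ Λ} × Bool) (d k : ℕ) (hk : k + d = mC 𝓑 A Λ),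
      K (.inl (c, ⟨k, by omega⟩)) ⊆ K (.inl (c, Fin.last (mC 𝓑 A Λ))) := by
    intro c d
    induction d with
    | zero =>
      intro k hk
      have : (⟨k, by omega⟩ : Fin (mC 𝓑 A Λ + 1)) = Fin.last (mC 𝓑 A Λ) := Fin.ext (by simpa using hk)
      rw [this]
    | succ d IH =>
      intro k hk
      have h1 := chainStep c ⟨k+1, by omega⟩
      have h2 : (⟨(⟨k+1, by omega⟩ : Fin (mC 𝓑 A Λ + 1)).val - 1,
          lt_of_le_of_lt (Nat.sub_le _ _) (Fin.isLt _)⟩ : Fin (mC 𝓑 A Λ + 1)) = ⟨k, by omega⟩ :=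
        Fin.ext (by simp)
      rw [h2] at h1
      exact h1.trans (IH (k+1) (by omega))
  -- chain nodes contain their inputs
  have chainIn : ∀ (c : Option {p // p ∈ Λ} × Bool) (k : ℕ) (x : {p // p ∈ Λ} ⊕ Set Γ)
      (hx : (inputListC 𝓑 A c)[k]? = some x) (hklt : k + 1 < mC 𝓑 A Λ + 1),
      Sum.elim (fun q => K (.inr q)) id x ⊆ K (.inl (c, ⟨k+1, hklt⟩)) := by
    intro c k x hx hklt
    have h := hKpre (.inl (c, ⟨k+1, hklt⟩))
    unfold gStep at h
    simp only [hgops, hg1, hg2, gopsC, garg1C, garg2C, Sum.elim_inl] at h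
    have h' : Sum.elim K id (resolveC 𝓑 A Λ
        (Sum.inl (c, ⟨k + 1 - 1, lt_of_le_of_lt (Nat.sub_le _ _) hklt⟩))
        (if k + 1 = 0 then none else (inputListC 𝓑 A c)[k + 1 - 1]?)) ⊆
        K (Sum.inl (c, ⟨k+1, hklt⟩)) := le_trans Set.subset_union_right h
    rw [if_neg (Nat.succ_ne_zero k)] at h'
    simp only [Nat.add_sub_cancel] at h'
    rw [hx] at h'
    cases x with
    | inl q => simpa [resolveC] using h'
    | inr B => simpa [resolveC] using h'
  have hinput : ∀ (c : Option {p // p ∈ Λ} × Bool) (x : {p // p ∈ Λ} ⊕ Set Γ),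
      x ∈ inputListC 𝓑 A c →
      Sum.elim (fun q => K (.inr q)) id x ⊆ K (.inl (c, Fin.last (mC 𝓑 A Λ))) := by
    intro c x hx
    obtain ⟨k, hk⟩ := List.mem_iff_getElem?.mp hx
    have hklen : k < (inputListC 𝓑 A c).length := by
      by_contra hge
      rw [List.getElem?_eq_none (by omega)] at hk
      cases hk
    have hkm : k + 1 ≤ mC 𝓑 A Λ := by
      have := len_le_mC 𝓑 A c
      omega
    refine (chainIn c k x hk (by omega)).trans ?_
    exact chainUp c (mC 𝓑 A Λ - (k+1)) (k+1) (by omega)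
  have hinB : ∀ (c : Option {p // p ∈ Λ} × Bool) (B : Set Γ), B ∈ 𝓑 → B ∩ Aᶜ ⊆ tgtC A c →
      B ⊆ K (.inl (c, Fin.last (mC 𝓑 A Λ))) := by
    intro c B hB hsub
    have := hinput c (Sum.inr B) (mem_inputListC.mpr (Or.inl ⟨B, rfl, hB, hsub⟩))
    simpa using this
  have hinQ : ∀ (c : Option {p // p ∈ Λ} × Bool) (q : {p // p ∈ Λ}),
      q.val.1 ∩ q.val.2 ⊆ tgtC A c →
      K (.inr q) ⊆ K (.inl (c, Fin.last (mC 𝓑 A Λ))) := by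
    intro c q hsub
    have := hinput c (Sum.inl q) (mem_inputListC.mpr (Or.inr ⟨q, rfl, hsub⟩))
    simpa using this
  -- the upper bound V
  set V : iotaC 𝓑 A Λ → Set Γ :=
    Sum.elim (fun ci => tgtC A ci.1 ∪ A) (fun q => (q.val.1 ∩ q.val.2) ∪ A) with hV
  have hVpre : ∀ i, gStep g1 g2 gops V i ⊆ V i := by
    intro i
    cases i with
    | inr q =>
      unfold gStep
      simp only [hgops, hg1, hg2, gopsC, garg1C, garg2C, if_pos, Sum.elim_inl, hV, Sum.elim_inr]
      intro y hy
      rcases hy.1 with h1 | h1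
      · rcases hy.2 with h2 | h2
        · exact Or.inl ⟨h1, h2⟩
        · exact Or.inr h2
      · exact Or.inr h1
    | inl ci =>
      obtain ⟨c, i⟩ := ci
      unfold gStep
      simp only [hgops, hg1, hg2, gopsC, garg1C, garg2C, Sum.elim_inl]
      rw [if_neg (by simp)]
      refine Set.union_subset ?_ ?_
      · exact le_of_eq rfl
      · rcases hsc : (if i.val = 0 then none else (inputListC 𝓑 A c)[i.val - 1]?) with _ | x
        · simp only [resolveC, Sum.elim_inl]
          exact le_of_eq rfl
        · have hmem : x ∈ inputListC 𝓑 A c := by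
            rcases Nat.eq_zero_or_pos i.val with h0 | h0
            · rw [if_pos h0] at hsc; cases hsc
            · rw [if_neg (by omega)] at hsc
              exact List.mem_of_getElem? hsc
          cases x with
          | inl q =>
            simp only [resolveC, Sum.elim_inl, hV, Sum.elim_inr]
            rcases mem_inputListC.mp hmem with ⟨B, hBx, _⟩ | ⟨q', hqx, hq⟩
            · exact absurd hBx (by simp)
            · have : q' = q := by injection hqx with h; exact h.symm
              subst this
              exact Set.union_subset_union_left A hq
          | inr B =>
            simp only [resolveC, Sum.elim_inr]
            rcases mem_inputListC.mp hmem with ⟨B', hBx, hB', hBsub⟩ | ⟨q', hqx, _⟩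
            · have : B' = B := by injection hBx with h; exact h.symm
              subst this
              intro y hy
              by_cases hyA : y ∈ A
              · exact Or.inr hyA
              · exact Or.inl (hBsub ⟨hy, hyA⟩)
            · exact absurd hqx (by simp)
  have hKV : ∀ i, K i ⊆ V i := fun i => gEval_le_of_prefixed g1 g2 gops V hVpre n i
  -- the output node computes exactly A
  have hKoutA : K (outC 𝓑 A Λ) ⊆ A := by
    refine (hKV _).trans ?_
    simp [hV, outC, tgtC]
  have hAout : A ⊆ K (outC 𝓑 A Λ) := by
    by_contra hnot
    rw [Set.not_subset] at hnot
    obtain ⟨a, ha, haK⟩ := hnot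
    apply hnoF
    by_cases hg : (∃ B ∈ 𝓑, a ∈ B) ∨ (∃ q : {p // p ∈ Λ}, a ∈ K (.inr q))
    · -- the interesting semi-filter
      refine ⟨{S | S ⊆ Aᶜ ∧ ((∃ B ∈ 𝓑, a ∈ B ∧ B ∩ Aᶜ ⊆ S) ∨
          (∃ q : {p // p ∈ Λ}, a ∈ K (.inr q) ∧ q.val.1 ∩ q.val.2 ⊆ S))}, a, ?_, ha, ?_, ?_⟩
      · refine ⟨⟨Aᶜ, subset_rfl, ?_⟩, fun S hS => hS.1, ?_, ?_⟩
        · rcases hg with ⟨B, hB, haB⟩ | ⟨q, hq⟩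
          · exact Or.inl ⟨B, hB, haB, Set.inter_subset_right⟩
          · exact Or.inr ⟨q, hq, (Set.inter_subset_left).trans (hΛsub q.val q.prop).1⟩
        · rintro S ⟨_, hS⟩ T hST hT
          refine ⟨hT, ?_⟩
          rcases hS with ⟨B, hB, haB, hBsub⟩ | ⟨q, hq, hqsub⟩
          · exact Or.inl ⟨B, hB, haB, hBsub.trans hST⟩
          · exact Or.inr ⟨q, hq, hqsub.trans hST⟩
        · rintro ⟨_, hS⟩
          rcases hS with ⟨B, hB, haB, hBsub⟩ | ⟨q, hq, hqsub⟩
          · have : B ∩ Aᶜ ⊆ tgtC A ((none : Option {p // p ∈ Λ}), true) := by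
              simpa [tgtC] using hBsub
            exact haK (hinB (none, true) B hB this haB)
          · have : q.val.1 ∩ q.val.2 ⊆ tgtC A ((none : Option {p // p ∈ Λ}), true) := by
              simpa [tgtC] using hqsub
            exact haK (hinQ (none, true) q this hq)
      · intro B hB haB
        exact ⟨Set.inter_subset_right, Or.inl ⟨B, hB, haB, subset_rfl⟩⟩
      · intro p hp h1 h2
        have sideE : a ∈ K (.inl ((some ⟨p, hp⟩, true), Fin.last (mC 𝓑 A Λ))) := by
          rcases h1.2 with ⟨B, hB, haB, hBsub⟩ | ⟨q, hq, hqsub⟩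
          · exact hinB (some ⟨p, hp⟩, true) B hB (by simpa [tgtC] using hBsub) haB
          · exact hinQ (some ⟨p, hp⟩, true) q (by simpa [tgtC] using hqsub) hq
        have sideH : a ∈ K (.inl ((some ⟨p, hp⟩, false), Fin.last (mC 𝓑 A Λ))) := by
          rcases h2.2 with ⟨B, hB, haB, hBsub⟩ | ⟨q, hq, hqsub⟩
          · exact hinB (some ⟨p, hp⟩, false) B hB (by simpa [tgtC] using hBsub) haB
          · exact hinQ (some ⟨p, hp⟩, false) q (by simpa [tgtC] using hqsub) hq
        have hmemgate : a ∈ K (.inr (⟨p, hp⟩ : {p // p ∈ Λ})) := hgate ⟨p, hp⟩ ⟨sideE, sideH⟩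
        exact ⟨(Set.inter_subset_left).trans (hΛsub p hp).1,
          Or.inr ⟨⟨p, hp⟩, hmemgate, subset_rfl⟩⟩
    · -- the trivial semi-filter {Aᶜ}
      push_neg at hg
      have hUne : (Aᶜ : Set Γ).Nonempty := Set.nonempty_compl.mpr hA₂
      refine ⟨{Aᶜ}, a, ?_, ha, ?_, ?_⟩
      · refine ⟨⟨Aᶜ, rfl⟩, ?_, ?_, ?_⟩
        · rintro S rfl; exact subset_rfl
        · rintro S rfl T hST hT
          exact Set.mem_singleton_iff.mpr (subset_antisymm hT hST)
        · intro hmem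
          exact hUne.ne_empty (Set.mem_singleton_iff.mp hmem).symm
      · intro B hB haB
        exact absurd haB (hg.1 B hB)
      · intro p hp hp1 hp2
        rw [Set.mem_singleton_iff] at hp1 hp2
        rw [hp1, hp2, Set.inter_self]
        rfl
  have hKout : K (outC 𝓑 A Λ) = A := subset_antisymm hKoutA hAout
  -- transport to a cyclic syntactic sequence on Fin (t+1)
  have hne : Nonempty (iotaC 𝓑 A Λ) := ⟨outC 𝓑 A Λ⟩
  have hcard : 1 ≤ Fintype.card (iotaC 𝓑 A Λ) := Fintype.card_pos_iff.mpr hne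
  set t := Fintype.card (iotaC 𝓑 A Λ) - 1 with hT
  have ht : t + 1 = Fintype.card (iotaC 𝓑 A Λ) := by omega
  set e0 : Fin (t+1) ≃ iotaC 𝓑 A Λ := (finCongr ht).trans (Fintype.equivFin _).symm with he0
  set e : Fin (t+1) ≃ iotaC 𝓑 A Λ :=
    e0.trans (Equiv.swap (e0 (Fin.last t)) (outC 𝓑 A Λ)) with he
  have helast : e (Fin.last t) = outC 𝓑 A Λ := by
    rw [he, Equiv.trans_apply, Equiv.swap_apply_left]
  set arg1 : Fin (t+1) → Fin (t+1) ⊕ Set Γ := fun i => Sum.map e.symm id (g1 (e i)) with harg1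
  set arg2 : Fin (t+1) → Fin (t+1) ⊕ Set Γ := fun i => Sum.map e.symm id (g2 (e i)) with harg2
  set ops : Fin (t+1) → Bool := fun i => gops (e i) with hops
  have hargsOK : ArgsOK 𝓑 arg1 arg2 := by
    intro i
    constructor
    · intro B hB
      exfalso
      have hB' : Sum.map e.symm id (g1 (e i)) = Sum.inr B := hB
      rcases hx : g1 (e i) with z | B'
      · rw [hx] at hB'; simp at hB'
      · have hnone : ∀ y : iotaC 𝓑 A Λ, ∀ B0 : Set Γ, garg1C 𝓑 A Λ y ≠ Sum.inr B0 := by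
          rintro (⟨c, ii⟩ | q) B0 <;> simp [garg1C]
        rw [hg1] at hx
        exact hnone (e i) B' hx
    · intro B hB
      have hB' : Sum.map e.symm id (g2 (e i)) = Sum.inr B := hB
      rcases hx : g2 (e i) with z | B'
      · rw [hx] at hB'; simp at hB'
      · rw [hx] at hB'
        simp only [Sum.map_inr, id] at hB'
        have hBB : B' = B := by injection hB'
        subst hBB
        rw [hg2] at hx
        revert hx
        rcases e i with ci | q
        · obtain ⟨c, ii⟩ := ci
          intro hx
          simp only [garg2C] at hx
          rcases hsc : (if ii.val = 0 then none else (inputListC 𝓑 A c)[ii.val - 1]?) with _ | x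
          · rw [hsc] at hx; simp [resolveC] at hx
          · rw [hsc] at hx
            have hmem : x ∈ inputListC 𝓑 A c := by
              rcases Nat.eq_zero_or_pos ii.val with h0 | h0
              · rw [if_pos h0] at hsc; cases hsc
              · rw [if_neg (by omega)] at hsc
                exact List.mem_of_getElem? hsc
            cases x with
            | inl q => simp [resolveC] at hx
            | inr B'' =>
              simp only [resolveC] at hx
              have hB2 : B'' = B' := by injection hx
              subst hB2
              rcases mem_inputListC.mp hmem with ⟨B3, hB3, hB3m, _⟩ | ⟨q', hq', _⟩
              · have : B'' = B3 := by injection hB3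
                rwa [this]
              · exact absurd hq' (by simp)
        · intro hx; simp [garg2C] at hx
  have hconv : ∀ j ≥ n, cycEval arg1 arg2 ops j (Fin.last t) = A := by
    intro j hj
    rw [harg1, harg2, hops, cycEval_eq_gEval e g1 g2 gops j (Fin.last t), helast,
      hstab j hj]
    exact hKout
  have hicount : interCount ops = Λ.card := by
    rw [interCount]
    rw [← Fintype.card_subtype]
    rw [Fintype.card_congr ((e.subtypeEquiv (fun x => by rw [hops])).trans (gateEquivC 𝓑 A Λ))]
    exact Fintype.card_coe Λ
  refine sInf_le ?_
  exact ⟨t, arg1, arg2, ops, hargsOK, ⟨n, hconv⟩, by rw [hicount]⟩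

end Dir2
/-- Exact characterization of cover complexity: for a nonempty
finite ground set `Γ`, a nonempty family `𝓑`, and a non-trivial `A ⊆ Γ`,
`ρ(A, 𝓑) = D°_∩(A | 𝓑)`. -/
theorem cover_eq_cyclic_inter {Γ : Type*} [Fintype Γ] [Nonempty Γ]
    (𝓑 : Set (Set Γ)) (h𝓑 : 𝓑.Nonempty)
    (A : Set Γ) (hA₁ : A ≠ ∅) (hA₂ : A ≠ Set.univ) :
    rho A 𝓑 = DcapCyc A 𝓑 := by
  apply le_antisymm
  · rw [DcapCyc]
    refine le_sInf ?_
    rintro m ⟨t, arg1, arg2, ops, hargs, ⟨j₀, hconv⟩, rfl⟩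
    exact rho_le_interCount 𝓑 A arg1 arg2 ops hargs j₀ hconv
  · rw [rho]
    refine le_sInf ?_
    rintro m ⟨Λ, hcov, rfl⟩
    exact dcapcyc_le_card 𝓑 A hA₂ Λ hcov
end

section
/- There exist constants c₁, c₂ > 0 such that, for G chosen uniformly at random among all subsets of [N] × [N], the probability that c₁ · N ≤ ρ(G, 𝓖_{N,N}) ≤ c₂ · N tends to 1 as N → ∞; that is, a random bipartite graph asymptotically almost surely has cover complexity Θ(N) with respect to the graph-complexity generators. -/
open Set Filter

inductive ClGen {Γ : Type*} (U : Set Γ) (base : Set (Set Γ)) (Λ : Finset (Set Γ × Set Γ)) :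
    Set Γ → Prop
  | base {S : Set Γ} : S ∈ base → ClGen U base Λ S
  | up {S T : Set Γ} : ClGen U base Λ S → S ⊆ T → T ⊆ U → ClGen U base Λ T
  | pair {p : Set Γ × Set Γ} : p ∈ Λ → ClGen U base Λ p.1 → ClGen U base Λ p.2 →
      ClGen U base Λ (p.1 ∩ p.2)

lemma clGen_subset {Γ : Type*} {U : Set Γ} {base : Set (Set Γ)} {Λ : Finset (Set Γ × Set Γ)}
    (hbase : ∀ S ∈ base, S ⊆ U) (hΛ : ∀ p ∈ Λ, p.1 ⊆ U) {S : Set Γ}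
    (h : ClGen U base Λ S) : S ⊆ U := by
  induction h with
  | base h => exact hbase _ h
  | up _ _ hTU => exact hTU
  | pair hp _ _ => exact fun x hx => hΛ _ hp hx.1

lemma clGen_empty_of_covers {Γ : Type*} {A : Set Γ} {𝓑 : Set (Set Γ)}
    {Λ : Finset (Set Γ × Set Γ)} (h : Covers A 𝓑 Λ) {a : Γ} (ha : a ∈ A)
    (hB : ∃ B ∈ 𝓑, a ∈ B) :
    ClGen Aᶜ {S | ∃ B ∈ 𝓑, a ∈ B ∧ S = B ∩ Aᶜ} Λ ∅ := by
  by_contra hne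
  set base : Set (Set Γ) := {S | ∃ B ∈ 𝓑, a ∈ B ∧ S = B ∩ Aᶜ} with hbase
  refine h.2 ⟨{S | ClGen Aᶜ base Λ S}, a, ⟨?_, ?_, ?_, hne⟩, ha, ?_, ?_⟩
  · obtain ⟨B, hBm, haB⟩ := hB
    exact ⟨B ∩ Aᶜ, ClGen.base ⟨B, hBm, haB, rfl⟩⟩
  · intro S hS
    refine clGen_subset ?_ (fun p hp => (h.1 p hp).1) hS
    rintro S ⟨B, _, _, rfl⟩
    exact Set.inter_subset_right
  · exact fun S hS T hST hTU => ClGen.up hS hST hTU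
  · exact fun B hBm haB => ClGen.base ⟨B, hBm, haB, rfl⟩
  · exact fun p hp h1 h2 => ClGen.pair hp h1 h2

-- upper bound
lemma rho_le_natCard (N : ℕ) (G : Set (Fin N × Fin N)) :
    rho G (graphGens N N) ≤ (N : ℕ∞) := by
  classical
  set f : Fin N → Set (Fin N × Fin N) × Set (Fin N × Fin N) :=
    fun i => (rowSet N N i ∩ Gᶜ, {p | p ∉ G ∧ (i, p.2) ∈ G}) with hf
  have hcov : Covers G (graphGens N N) (Finset.univ.image f) := by
    constructor
    · intro p hp
      obtain ⟨i, _, rfl⟩ := Finset.mem_image.mp hp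
      exact ⟨Set.inter_subset_right, fun x hx => hx.1⟩
    · rintro ⟨F, a, ⟨hne, hsub, hup, hemp⟩, haG, hab, hpres⟩
      have hX : rowSet N N a.1 ∩ Gᶜ ∈ F :=
        hab _ (Set.mem_union_left _ ⟨a.1, rfl⟩) rfl
      have hC : colSet N N a.2 ∩ Gᶜ ∈ F :=
        hab _ (Set.mem_union_right _ ⟨a.2, rfl⟩) rfl
      have hY : {p : Fin N × Fin N | p ∉ G ∧ (a.1, p.2) ∈ G} ∈ F := by
        refine hup _ hC _ ?_ (fun p hp => hp.1)
        rintro p ⟨hp2, hpG⟩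
        refine ⟨hpG, ?_⟩
        have : (a.1, p.2) = a := by
          have : p.2 = a.2 := hp2
          rw [this]
        rw [this]
        exact haG
      have hpair := hpres (f a.1) (Finset.mem_image_of_mem f (Finset.mem_univ a.1)) hX hY
      have hempty : (rowSet N N a.1 ∩ Gᶜ) ∩ {p : Fin N × Fin N | p ∉ G ∧ (a.1, p.2) ∈ G} = ∅ := by
        apply Set.eq_empty_iff_forall_notMem.mpr
        rintro p ⟨⟨hp1, hpG⟩, -, hG2⟩
        have h1 : p.1 = a.1 := hp1
        have : (a.1, p.2) = p := Prod.ext h1.symm rfl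
        rw [this] at hG2
        exact hpG hG2
      rw [hempty] at hpair
      exact hemp hpair
  calc rho G (graphGens N N) ≤ ((Finset.univ.image f).card : ℕ∞) :=
        sInf_le ⟨_, hcov, rfl⟩
    _ ≤ (N : ℕ∞) := by
        have hcard : (Finset.univ.image f).card ≤ N :=
          le_trans Finset.card_image_le (by simp)
        exact_mod_cast hcard

def CData (N T : ℕ) : Type :=
  (Fin T → Set (Fin N)) × (Fin T → Set (Fin N)) × (Fin T → Set (Fin N)) ×
    (Fin T → Set (Fin N)) × (Fin T → Prop) × (Fin T → Fin T → Prop) ×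
    (Fin T → Fin T → Prop) × Set (Fin N) × Set (Fin N)

noncomputable instance (N T : ℕ) : Fintype (CData N T) := by unfold CData; infer_instance

lemma card_CData (N T : ℕ) :
    Fintype.card (CData N T) = 2 ^ (4*(N*T) + T + 2*(T*T) + 2*N) := by
  simp only [CData, Fintype.card_prod, Fintype.card_fun, Fintype.card_set, Fintype.card_prop,
    Fintype.card_fin, ← pow_mul, ← pow_add]
  congr 1
  ring

section Decode

variable {N T : ℕ}

def dP (d : CData N T) : Fin T → Set (Fin N) := d.1
def dP' (d : CData N T) : Fin T → Set (Fin N) := d.2.1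
def dQ (d : CData N T) : Fin T → Set (Fin N) := d.2.2.1
def dQ' (d : CData N T) : Fin T → Set (Fin N) := d.2.2.2.1
def dE (d : CData N T) : Fin T → Prop := d.2.2.2.2.1
def dR1 (d : CData N T) : Fin T → Fin T → Prop := d.2.2.2.2.2.1
def dR2 (d : CData N T) : Fin T → Fin T → Prop := d.2.2.2.2.2.2.1
def dZR (d : CData N T) : Set (Fin N) := d.2.2.2.2.2.2.2.1
def dZC (d : CData N T) : Set (Fin N) := d.2.2.2.2.2.2.2.2

def dClosed (d : CData N T) (w : Fin N × Fin N) (S : Set (Fin T)) : Prop :=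
  ∀ k : Fin T,
    ((w.1 ∈ dP d k ∨ w.2 ∈ dP' d k ∨ ∃ l ∈ S, dR1 d l k) ∧
     (w.1 ∈ dQ d k ∨ w.2 ∈ dQ' d k ∨ ∃ l ∈ S, dR2 d l k)) → k ∈ S

def dDer (d : CData N T) (w : Fin N × Fin N) : Set (Fin T) :=
  {k | ∀ S, dClosed d w S → k ∈ S}

lemma dDer_closed (d : CData N T) (w : Fin N × Fin N) : dClosed d w (dDer d w) := by
  intro k hk S hS
  apply hS k
  constructor
  · rcases hk.1 with h | h | ⟨l, hl, h⟩
    exacts [Or.inl h, Or.inr (Or.inl h), Or.inr (Or.inr ⟨l, hl S hS, h⟩)]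
  · rcases hk.2 with h | h | ⟨l, hl, h⟩
    exacts [Or.inl h, Or.inr (Or.inl h), Or.inr (Or.inr ⟨l, hl S hS, h⟩)]

def decodeSet (d : CData N T) : Set (Fin N × Fin N) :=
  {w | w.1 ∈ dZR d ∨ w.2 ∈ dZC d ∨ ∃ k, k ∈ dDer d w ∧ dE d k}

noncomputable def decodeF (d : CData N T) : Finset (Fin N × Fin N) :=
  (Set.toFinite (decodeSet d)).toFinset

end Decode

lemma exists_enum {α : Type*} {s : Finset α} (hne : s.Nonempty) {n : ℕ} (hn : s.card ≤ n) :
    ∃ e : Fin n → α, Set.range e = ↑s := by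
  obtain ⟨a, ha⟩ := hne
  refine ⟨fun k => if h : (k : ℕ) < s.toList.length then s.toList.get ⟨k, h⟩ else a, ?_⟩
  ext x
  simp only [Set.mem_range, Finset.mem_coe]
  constructor
  · rintro ⟨k, rfl⟩
    split_ifs with h
    · exact Finset.mem_toList.mp (List.get_mem s.toList ⟨k, h⟩)
    · exact ha
  · intro hx
    obtain ⟨⟨i, hi⟩, hg⟩ := List.mem_iff_get.mp (Finset.mem_toList.mpr hx)
    have hi' : i < n := lt_of_lt_of_le (by simpa [Finset.length_toList] using hi) hn
    refine ⟨⟨i, hi'⟩, ?_⟩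
    simp only [hi, dif_pos]
    exact hg

lemma decode_surj (N T : ℕ) {G : Finset (Fin N × Fin N)}
    {Λ : Finset (Set (Fin N × Fin N) × Set (Fin N × Fin N))}
    (hC : Covers (↑G : Set (Fin N × Fin N)) (graphGens N N) Λ) (hcard : Λ.card + 1 ≤ T) :
    ∃ d : CData N T, decodeF d = G := by
  classical
  set A : Set (Fin N × Fin N) := ↑G with hA
  set Λ' : Finset (Set (Fin N × Fin N) × Set (Fin N × Fin N)) := insert (Aᶜ, Aᶜ) Λ with hΛ'
  have hC' : Covers A (graphGens N N) Λ' := by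
    constructor
    · intro p hp
      rcases Finset.mem_insert.mp hp with rfl | hp
      · exact ⟨subset_rfl, subset_rfl⟩
      · exact hC.1 p hp
    · rintro ⟨F, a, hSF, ha, hab, hpres⟩
      exact hC.2 ⟨F, a, hSF, ha, hab, fun p hp => hpres p (Finset.mem_insert_of_mem hp)⟩
  have hne : Λ'.Nonempty := ⟨_, Finset.mem_insert_self _ _⟩
  have hle : Λ'.card ≤ T := le_trans (Finset.card_insert_le _ _) hcard
  obtain ⟨e, he⟩ := exists_enum hne hle
  set d : CData N T :=
    (fun k => {i | rowSet N N i ∩ Aᶜ ⊆ (e k).1},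
     fun k => {j | colSet N N j ∩ Aᶜ ⊆ (e k).1},
     fun k => {i | rowSet N N i ∩ Aᶜ ⊆ (e k).2},
     fun k => {j | colSet N N j ∩ Aᶜ ⊆ (e k).2},
     fun k => (e k).1 ∩ (e k).2 = ∅,
     fun l k => (e l).1 ∩ (e l).2 ⊆ (e k).1,
     fun l k => (e l).1 ∩ (e l).2 ⊆ (e k).2,
     {i | rowSet N N i ∩ Aᶜ = ∅},
     {j | colSet N N j ∩ Aᶜ = ∅}) with hd
  refine ⟨d, ?_⟩
  have hdec : decodeSet d = A := by
    ext w
    constructor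
    · intro hw
      by_contra hwA
      have hwU : w ∈ Aᶜ := hwA
      have hstar : dClosed d w {k | w ∈ (e k).1 ∩ (e k).2} := by
        intro k hk
        constructor
        · rcases hk.1 with h | h | ⟨l, hl, h⟩
          · exact h ⟨rfl, hwU⟩
          · exact h ⟨rfl, hwU⟩
          · exact h hl
        · rcases hk.2 with h | h | ⟨l, hl, h⟩
          · exact h ⟨rfl, hwU⟩
          · exact h ⟨rfl, hwU⟩
          · exact h hl
      rcases hw with h | h | ⟨k, hk, hek⟩
      · exact Set.eq_empty_iff_forall_notMem.mp h w ⟨rfl, hwU⟩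
      · exact Set.eq_empty_iff_forall_notMem.mp h w ⟨rfl, hwU⟩
      · have hmem : w ∈ (e k).1 ∩ (e k).2 := hk _ hstar
        have hek' : (e k).1 ∩ (e k).2 = ∅ := hek
        rw [hek'] at hmem
        exact hmem
    · intro hwA
      have hB : ∃ B ∈ graphGens N N, w ∈ B :=
        ⟨rowSet N N w.1, Set.mem_union_left _ ⟨w.1, rfl⟩, rfl⟩
      have h0 : ClGen Aᶜ {S | ∃ B ∈ graphGens N N, w ∈ B ∧ S = B ∩ Aᶜ} Λ' ∅ :=
        clGen_empty_of_covers hC' hwA hB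
      have core : ∀ S, ClGen Aᶜ {S | ∃ B ∈ graphGens N N, w ∈ B ∧ S = B ∩ Aᶜ} Λ' S →
          ∃ D, D ⊆ S ∧ (D = rowSet N N w.1 ∩ Aᶜ ∨ D = colSet N N w.2 ∩ Aᶜ ∨
            ∃ k, k ∈ dDer d w ∧ D = (e k).1 ∩ (e k).2) := by
        intro S hS
        induction hS with
        | base h =>
          obtain ⟨B, hBm, hwB, rfl⟩ := h
          rcases hBm with ⟨i, rfl⟩ | ⟨j, rfl⟩
          · have hi : w.1 = i := hwB
            subst hi
            exact ⟨_, subset_rfl, Or.inl rfl⟩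
          · have hj : w.2 = j := hwB
            subst hj
            exact ⟨_, subset_rfl, Or.inr (Or.inl rfl)⟩
        | up hS hST hTU ih =>
          obtain ⟨D, hDS, hcase⟩ := ih
          exact ⟨D, hDS.trans hST, hcase⟩
        | pair hp h1 h2 ih1 ih2 =>
          rename_i p
          obtain ⟨k, hek⟩ : ∃ k, e k = p := by
            have : p ∈ Set.range e := by rw [he]; exact Finset.mem_coe.mpr hp
            exact this
          obtain ⟨D1, hD1, hc1⟩ := ih1
          obtain ⟨D2, hD2, hc2⟩ := ih2
          have hD1' : D1 ⊆ (e k).1 := by rw [hek]; exact hD1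
          have hD2' : D2 ⊆ (e k).2 := by rw [hek]; exact hD2
          have hkmem : k ∈ dDer d w := by
            apply dDer_closed d w k
            constructor
            · rcases hc1 with rfl | rfl | ⟨l, hl, rfl⟩
              · exact Or.inl hD1'
              · exact Or.inr (Or.inl hD1')
              · exact Or.inr (Or.inr ⟨l, hl, hD1'⟩)
            · rcases hc2 with rfl | rfl | ⟨l, hl, rfl⟩
              · exact Or.inl hD2'
              · exact Or.inr (Or.inl hD2')
              · exact Or.inr (Or.inr ⟨l, hl, hD2'⟩)
          refine ⟨(e k).1 ∩ (e k).2, ?_, Or.inr (Or.inr ⟨k, hkmem, rfl⟩)⟩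
          rw [hek]
      obtain ⟨D, hD0, hcase⟩ := core ∅ h0
      have hDe : D = ∅ := Set.subset_empty_iff.mp hD0
      subst hDe
      rcases hcase with h | h | ⟨k, hk, h⟩
      · exact Or.inl (show rowSet N N w.1 ∩ Aᶜ = ∅ from h.symm)
      · exact Or.inr (Or.inl (show colSet N N w.2 ∩ Aᶜ = ∅ from h.symm))
      · exact Or.inr (Or.inr ⟨k, hk, show (e k).1 ∩ (e k).2 = ∅ from h.symm⟩)
  apply Finset.coe_injective
  rw [decodeF, Set.Finite.coe_toFinset, hdec]

lemma bad_count (N T : ℕ) :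
    ({G : Finset (Fin N × Fin N) |
        ∃ Λ, Covers (↑G : Set (Fin N × Fin N)) (graphGens N N) Λ ∧ Λ.card + 1 ≤ T}).ncard
      ≤ 2 ^ (4*(N*T) + T + 2*(T*T) + 2*N) := by
  have hsub : {G : Finset (Fin N × Fin N) |
        ∃ Λ, Covers (↑G : Set (Fin N × Fin N)) (graphGens N N) Λ ∧ Λ.card + 1 ≤ T}
      ⊆ Set.range (decodeF (N := N) (T := T)) := by
    rintro G ⟨Λ, hC, hcard⟩
    obtain ⟨d, hd⟩ := decode_surj N T hC hcard
    exact ⟨d, hd⟩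
  calc _ ≤ (Set.range (decodeF (N := N) (T := T))).ncard :=
        Set.ncard_le_ncard hsub (Set.finite_range _)
    _ = Nat.card (Set.range (decodeF (N := N) (T := T))) :=
        (Nat.card_coe_set_eq _).symm
    _ ≤ Nat.card (CData N T) := Finite.card_range_le _
    _ = 2 ^ (4*(N*T) + T + 2*(T*T) + 2*N) := by
        rw [Nat.card_eq_fintype_card, card_CData]

lemma exp_bound {N : ℕ} (h : 100 ≤ N) :
    4*(N*(N/100+1)) + (N/100+1) + 2*((N/100+1)*(N/100+1)) + 2*N + N ≤ N*N := by
  set u := N/100 with hu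
  have h1 : 100*u ≤ N := by omega
  have h2 : u ≤ N := by omega
  nlinarith [Nat.mul_le_mul h1 h2, Nat.mul_le_mul h1 (le_refl N), Nat.mul_le_mul h h1]

lemma rho_lt_extract {N : ℕ} {G : Finset (Fin N × Fin N)} {t : ℕ}
    (h : rho (↑G : Set (Fin N × Fin N)) (graphGens N N) < ((t + 1 : ℕ) : ℕ∞)) :
    ∃ Λ, Covers (↑G : Set (Fin N × Fin N)) (graphGens N N) Λ ∧ Λ.card + 1 ≤ t + 1 := by
  by_contra hno
  push_neg at hno
  have hge : ((t + 1 : ℕ) : ℕ∞) ≤ rho (↑G : Set (Fin N × Fin N)) (graphGens N N) := by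
    apply le_sInf
    rintro m ⟨Λ, hC, rfl⟩
    have := hno Λ hC
    exact_mod_cast Nat.succ_le_of_lt (by omega)
  exact absurd h (not_lt.mpr hge)

theorem cover_complexity_random_graph_aux :
    ∃ c₁ c₂ : ℝ, 0 < c₁ ∧ 0 < c₂ ∧
      Filter.Tendsto
        (fun N : ℕ =>
          (({G : Finset (Fin N × Fin N) |
              ENNReal.ofReal (c₁ * N) ≤
                ENat.toENNReal (rho (↑G : Set (Fin N × Fin N)) (graphGens N N)) ∧
              ENat.toENNReal (rho (↑G : Set (Fin N × Fin N)) (graphGens N N)) ≤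
                ENNReal.ofReal (c₂ * N)}).ncard : ℝ) / (2 : ℝ) ^ (N * N))
        Filter.atTop (nhds 1) := by
  refine ⟨1/100, 1, by norm_num, one_pos, ?_⟩
  set E : (N : ℕ) → Set (Finset (Fin N × Fin N)) := fun N =>
    {G : Finset (Fin N × Fin N) |
      ENNReal.ofReal ((1:ℝ)/100 * N) ≤
        ENat.toENNReal (rho (↑G : Set (Fin N × Fin N)) (graphGens N N)) ∧
      ENat.toENNReal (rho (↑G : Set (Fin N × Fin N)) (graphGens N N)) ≤
        ENNReal.ofReal ((1:ℝ) * N)} with hE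
  have hcard : ∀ N : ℕ, ((E N).ncard : ℝ) = 2^(N*N) - ((E N)ᶜ.ncard : ℝ) := by
    intro N
    have h1 := Set.ncard_add_ncard_compl (E N)
    have h2 : Nat.card (Finset (Fin N × Fin N)) = 2 ^ (N*N) := by
      rw [Nat.card_eq_fintype_card, Fintype.card_finset]
      congr 1
      simp
    rw [h2] at h1
    have := congrArg (fun n : ℕ => (n : ℝ)) h1
    push_cast at this
    linarith
  set g : ℕ → ℝ := fun N => ((E N)ᶜ.ncard : ℝ) / 2^(N*N) with hg
  have hfg : (fun N : ℕ => ((E N).ncard : ℝ) / (2:ℝ)^(N*N)) = fun N => 1 - g N := by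
    funext N
    rw [hg]
    simp only
    rw [hcard N]
    have h2 : (2:ℝ)^(N*N) ≠ 0 := by positivity
    field_simp
  have hgto : Filter.Tendsto g Filter.atTop (nhds 0) := by
    apply squeeze_zero' (Filter.Eventually.of_forall fun N => by positivity)
      (g := fun N => (1/2:ℝ)^N)
    · filter_upwards [Filter.eventually_ge_atTop 100] with N hN
      -- bound g N
      have hbadsub : (E N)ᶜ ⊆ {G : Finset (Fin N × Fin N) |
          ∃ Λ, Covers (↑G : Set (Fin N × Fin N)) (graphGens N N) Λ ∧ Λ.card + 1 ≤ N/100 + 1} := by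
        intro G hG
        have hupper : ENat.toENNReal (rho (↑G : Set (Fin N × Fin N)) (graphGens N N)) ≤
            ENNReal.ofReal ((1:ℝ) * N) := by
          have h1 := rho_le_natCard N (↑G : Set (Fin N × Fin N))
          calc ENat.toENNReal (rho (↑G : Set (Fin N × Fin N)) (graphGens N N))
              ≤ ENat.toENNReal ((N : ℕ∞)) := ENat.toENNReal_le.mpr h1
            _ = (N : ENNReal) := by simp
            _ = ENNReal.ofReal ((1:ℝ) * N) := by
                rw [one_mul, ENNReal.ofReal_natCast]
        have hlow : ¬ (ENNReal.ofReal ((1:ℝ)/100 * N) ≤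
            ENat.toENNReal (rho (↑G : Set (Fin N × Fin N)) (graphGens N N))) := by
          intro hcontra
          exact hG ⟨hcontra, hupper⟩
        rw [not_le] at hlow
        have hstep : ENNReal.ofReal ((1:ℝ)/100 * N) ≤ ((N/100 + 1 : ℕ) : ENNReal) := by
          rw [← ENNReal.ofReal_natCast]
          apply ENNReal.ofReal_le_ofReal
          have hN100 : (N:ℕ) ≤ 100*(N/100) + 100 := by omega
          have : (N:ℝ) ≤ 100*((N/100 : ℕ):ℝ) + 100 := by exact_mod_cast hN100
          push_cast
          linarith
        have hlt2 : rho (↑G : Set (Fin N × Fin N)) (graphGens N N) < ((N/100 + 1 : ℕ) : ℕ∞) := by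
          have := lt_of_lt_of_le hlow hstep
          exact_mod_cast this
        exact rho_lt_extract hlt2
      have hc1 : ((E N)ᶜ).ncard ≤ 2 ^ (4*(N*(N/100+1)) + (N/100+1) + 2*((N/100+1)*(N/100+1)) + 2*N) :=
        le_trans (Set.ncard_le_ncard hbadsub (Set.toFinite _)) (bad_count N (N/100+1))
      have hexp := exp_bound hN
      have hnat : ((E N)ᶜ).ncard * 2^N ≤ 2^(N*N) := by
        calc ((E N)ᶜ).ncard * 2^N
            ≤ 2 ^ (4*(N*(N/100+1)) + (N/100+1) + 2*((N/100+1)*(N/100+1)) + 2*N) * 2^N :=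
              Nat.mul_le_mul_right _ hc1
          _ = 2 ^ (4*(N*(N/100+1)) + (N/100+1) + 2*((N/100+1)*(N/100+1)) + 2*N + N) := by
              rw [← pow_add]
          _ ≤ 2^(N*N) := Nat.pow_le_pow_right (by norm_num) hexp
      have hq : ((1:ℝ)/2)^N * 2^(N*N) = 2^(N*N) / 2^N := by
        rw [one_div, inv_pow, inv_mul_eq_div]
      rw [hg]
      simp only
      rw [div_le_iff₀ (by positivity), hq, le_div_iff₀ (by positivity)]
      exact_mod_cast hnat
    · exact tendsto_pow_atTop_nhds_zero_of_lt_one (by norm_num) (by norm_num)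
  have : Filter.Tendsto (fun N : ℕ => ((E N).ncard : ℝ) / (2:ℝ)^(N*N)) Filter.atTop (nhds 1) := by
    rw [hfg]
    simpa using tendsto_const_nhds.sub hgto
  exact this

/-- Cover complexity of a random graph: there are constants
`c₁, c₂ > 0` such that, for `G` a uniformly random subset of `[N] × [N]`, the
probability that `c₁·N ≤ ρ(G, 𝓖_{N,N}) ≤ c₂·N` tends to `1` as `N → ∞`. -/
theorem cover_complexity_random_graph :
    ∃ c₁ c₂ : ℝ, 0 < c₁ ∧ 0 < c₂ ∧
      Filter.Tendsto
        (fun N : ℕ =>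
          (({G : Finset (Fin N × Fin N) |
              ENNReal.ofReal (c₁ * N) ≤
                ENat.toENNReal (rho (↑G : Set (Fin N × Fin N)) (graphGens N N)) ∧
              ENat.toENNReal (rho (↑G : Set (Fin N × Fin N)) (graphGens N N)) ≤
                ENNReal.ofReal (c₂ * N)}).ncard : ℝ) / (2 : ℝ) ^ (N * N))
        Filter.atTop (nhds 1) := by
  exact cover_complexity_random_graph_aux
end

section
/- Let N = 2^n and let G ⊆ [N] × [N] be a non-trivial bipartite graph. Then ρ(G, 𝓖_{N,N}) ≤ ρ(φ(G), 𝓑_{2n}); that is, the cover complexity of G with respect to the graph-complexity generators is at most the cover complexity of the associated Boolean function f_G with respect to the circuit-complexity generators. -/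
open Set Filter

lemma binMap_injective (n : ℕ) : Function.Injective (binMap n) := by
  intro a b hab
  apply Fin.ext
  apply Nat.eq_of_testBit_eq
  intro i
  rcases lt_or_ge i n with hi | hi
  · have h := congrFun hab ⟨n - 1 - i, by omega⟩
    simpa [binMap, show n - 1 - (n - 1 - i) = i by omega] using h
  · rw [Nat.testBit_lt_two_pow (lt_of_lt_of_le a.isLt (Nat.pow_le_pow_right (by norm_num) hi)),
      Nat.testBit_lt_two_pow (lt_of_lt_of_le b.isLt (Nat.pow_le_pow_right (by norm_num) hi))]

lemma phi_injective (n : ℕ) : Function.Injective (phi n) := by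
  intro p q h
  have h1 : p.1 = q.1 := by
    apply binMap_injective n
    funext j
    have hj := congrFun h ⟨(j : ℕ), by omega⟩
    simpa [phi, j.isLt] using hj
  have h2 : p.2 = q.2 := by
    apply binMap_injective n
    funext j
    have hj := congrFun h ⟨n + (j : ℕ), by omega⟩
    have hn : ¬ (n + (j : ℕ) < n) := by omega
    simp only [phi, dif_neg hn] at hj
    simpa [show n + (j : ℕ) - n = (j : ℕ) by omega] using hj
  exact Prod.ext h1 h2

theorem fusion_transference' (n : ℕ) (G : Set (Fin (2 ^ n) × Fin (2 ^ n)))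
    (hG₁ : G ≠ ∅) (hG₂ : G ≠ Set.univ) :
    rho G (graphGens (2 ^ n) (2 ^ n)) ≤ rho (phi n '' G) (cubeGens (2 * n)) := by
  classical
  apply le_sInf
  rintro m ⟨Λ', ⟨hΛ'sub, hΛ'cov⟩, rfl⟩
  have hφ : Function.Injective (phi n) := phi_injective n
  set φ := phi n with hφdef
  set Λ : Finset (Set (Fin (2 ^ n) × Fin (2 ^ n)) × Set (Fin (2 ^ n) × Fin (2 ^ n))) :=
    Λ'.image (fun p => (φ ⁻¹' p.1, φ ⁻¹' p.2)) with hΛdef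
  have hcard : ((Λ.card : ℕ) : ℕ∞) ≤ ((Λ'.card : ℕ) : ℕ∞) := by
    exact_mod_cast Finset.card_image_le
  refine le_trans (sInf_le ⟨Λ, ⟨?_, ?_⟩, rfl⟩) hcard
  · rintro p hp
    simp only [hΛdef, Finset.mem_image] at hp
    obtain ⟨q, hq, rfl⟩ := hp
    obtain ⟨hq1, hq2⟩ := hΛ'sub q hq
    exact ⟨fun x hx hxG => hq1 hx ⟨x, hxG, rfl⟩, fun x hx hxG => hq2 hx ⟨x, hxG, rfl⟩⟩
  · rintro ⟨F, a, ⟨⟨S₀, hS₀⟩, hsub, hup, hemp⟩, haG, hAb, hPres⟩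
    apply hΛ'cov
    have hGc : Gᶜ ∈ F := hup S₀ hS₀ Gᶜ (hsub S₀ hS₀) subset_rfl
    set U : Set (Fin (2 * n) → Bool) := (φ '' G)ᶜ with hUdef
    have hpreU : φ ⁻¹' U = Gᶜ := by
      rw [hUdef, Set.preimage_compl, Set.preimage_image_eq G hφ]
    refine ⟨{S | S ⊆ U ∧ φ ⁻¹' S ∈ F}, φ a, ⟨⟨U, subset_rfl, by rw [hpreU]; exact hGc⟩,
      fun S hS => hS.1, fun S hS T hST hTU => ⟨hTU, hup _ hS.2 _ (Set.preimage_mono hST)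
        (by rw [← hpreU]; exact Set.preimage_mono hTU)⟩,
      fun h => hemp (by simpa using h.2)⟩, ⟨a, haG, rfl⟩, ?_, ?_⟩
    · -- Above
      rintro B ⟨i, hi⟩ haB
      refine ⟨Set.inter_subset_right, ?_⟩
      have hXmem : ∀ X : Set (Fin (2 ^ n) × Fin (2 ^ n)),
          X ∈ graphGens (2 ^ n) (2 ^ n) → a ∈ X → X ⊆ φ ⁻¹' B → φ ⁻¹' (B ∩ U) ∈ F := by
        intro X hXgen haX hXB
        have h1 : X ∩ Gᶜ ∈ F := hAb X hXgen haX
        have h2 : X ∩ Gᶜ ⊆ φ ⁻¹' (B ∩ U) := by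
          rw [Set.preimage_inter, hpreU]
          exact Set.inter_subset_inter_left _ hXB
        exact hup _ h1 _ h2 (by rw [Set.preimage_inter, hpreU]; exact Set.inter_subset_right)
      rcases lt_or_ge (i : ℕ) n with hlt | hge
      · refine hXmem (rowSet (2 ^ n) (2 ^ n) a.1) (Or.inl ⟨a.1, rfl⟩) rfl ?_
        intro p hp
        have hpa : φ p i = φ a i := by
          simp only [hφdef, phi, dif_pos hlt]
          have : p.1 = a.1 := hp
          rw [this]
        rcases hi with rfl | rfl
        · show φ p i = true
          rw [hpa]; exact haB
        · show φ p i = false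
          rw [hpa]; exact haB
      · refine hXmem (colSet (2 ^ n) (2 ^ n) a.2) (Or.inr ⟨a.2, rfl⟩) rfl ?_
        intro p hp
        have hn : ¬ ((i : ℕ) < n) := by omega
        have hpa : φ p i = φ a i := by
          simp only [hφdef, phi, dif_neg hn]
          have : p.2 = a.2 := hp
          rw [this]
        rcases hi with rfl | rfl
        · show φ p i = true
          rw [hpa]; exact haB
        · show φ p i = false
          rw [hpa]; exact haB
    · -- Preserves pairs
      intro p hp h1 h2
      have hmem : (φ ⁻¹' p.1, φ ⁻¹' p.2) ∈ Λ := by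
        rw [hΛdef]; exact Finset.mem_image_of_mem _ hp
      have hin := hPres _ hmem h1.2 h2.2
      refine ⟨?_, ?_⟩
      · intro x hx
        exact h1.1 hx.1
      · rw [Set.preimage_inter]; exact hin

/-- Fusion transference lemma: for `N = 2^n` and a non-trivial
graph `G ⊆ [N] × [N]`, `ρ(G, 𝓖_{N,N}) ≤ ρ(φ(G), 𝓑_{2n})`. -/
theorem fusion_transference (n : ℕ) (G : Set (Fin (2 ^ n) × Fin (2 ^ n)))
    (hG₁ : G ≠ ∅) (hG₂ : G ≠ Set.univ) :
    rho G (graphGens (2 ^ n) (2 ^ n)) ≤ rho (phi n '' G) (cubeGens (2 * n)) := by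
  exact fusion_transference' n G hG₁ hG₂
end
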